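/- arXiv:2107.07819 — 6 statements merged into one kernel-verified Lean document; each statement's English description precedes it below -/
import Mathlib

section
/- Let A be a complex *-algebra that is algebraic and whose involution is proper. Then A is hermitian and semisimple. -/
/-- A (possibly non-unital) complex algebra is *algebraic* if every element generates a
finite-dimensional subalgebra (equivalently, every element is a root of a nonzero
polynomial with complex coefficients). -/
def IsAlgebraicAlgebra (A : Type*) [NonUnitalRing A] [Module ℂ A] : Prop :=
  ∀ a : A, ∃ S : NonUnitalSubalgebra ℂ A, a ∈ S ∧ FiniteDimensional ℂ S

/-- A pre-C*-norm on a complex `*`-algebra: a submultiplicative norm `σ` with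
`σ (x* x) = σ x ^ 2`. -/
def HasPreCstarNorm (A : Type*) [NonUnitalRing A] [Module ℂ A] [Star A] : Prop :=
  ∃ σ : A → ℝ,
    (∀ a : A, σ a = 0 ↔ a = 0) ∧
    (∀ (c : ℂ) (a : A), σ (c • a) = ‖c‖ * σ a) ∧
    (∀ a b : A, σ (a + b) ≤ σ a + σ b) ∧
    (∀ a b : A, σ (a * b) ≤ σ a * σ b) ∧
    (∀ a : A, σ (star a * a) = σ a ^ 2)

/-- The involution is proper if `a* a = 0` implies `a = 0`. -/
def HasProperInvolution (A : Type*) [NonUnitalRing A] [Star A] : Prop :=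
  ∀ a : A, star a * a = 0 → a = 0

/-- Hermitian: every selfadjoint element has real spectrum (computed in the
unitization `ℂ ⊕ A`). -/
def IsHermitianStarAlgebra (A : Type*) [NonUnitalRing A] [Module ℂ A]
    [SMulCommClass ℂ A A] [IsScalarTower ℂ A A] [Star A] : Prop :=
  ∀ a : A, star a = a → ∀ z ∈ spectrum ℂ (a : Unitization ℂ A), z.im = 0

/-- Semisimple: the Jacobson radical is `{0}` (expressed via the unitization, whose
Jacobson radical meets `A` exactly in the Jacobson radical of `A`). -/
def IsSemisimpleAlgebra (A : Type*) [NonUnitalRing A] [Module ℂ A]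
    [SMulCommClass ℂ A A] [IsScalarTower ℂ A A] : Prop :=
  ∀ a : A, (a : Unitization ℂ A) ∈ (⊥ : Ideal (Unitization ℂ A)).jacobson → a = 0


open Polynomial Unitization in
/-- In any ring, `1 + x` is a unit when `x` lies in the Jacobson radical of `⊥`. -/
lemma aux_isUnit_one_add {R : Type*} [Ring R] {x : R}
    (hx : x ∈ (⊥ : Ideal R).jacobson) : IsUnit (1 + x) := by
  obtain ⟨u, hu⟩ := Ideal.exists_mul_add_sub_mem_of_mem_jacobson x hx
  rw [Ideal.mem_bot, sub_eq_zero] at hu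
  have hux : -(u * x) ∈ (⊥ : Ideal R).jacobson := neg_mem (Ideal.mul_mem_left _ u hx)
  obtain ⟨v, hv⟩ := Ideal.exists_mul_add_sub_mem_of_mem_jacobson _ hux
  rw [Ideal.mem_bot, sub_eq_zero] at hv
  have hu' : u = -(u * x) + 1 := by
    have h1 : u * x + u = 1 := by rw [← hu]; noncomm_ring
    rw [neg_add_eq_sub]
    exact eq_sub_of_add_eq' h1
  rw [← hu'] at hv
  have hvval : v = 1 + x := by
    calc v = v * (u * (x + 1)) := by rw [hu, mul_one]
    _ = v * u * (x + 1) := by rw [mul_assoc]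
    _ = 1 + x := by rw [hv, one_mul, add_comm]
  refine ⟨⟨1 + x, u, ?_, ?_⟩, rfl⟩
  · rw [← hvval, hv]
  · rw [add_comm, hu]


section AuxProofs

open Polynomial Unitization

variable {A : Type*} [NonUnitalRing A] [Module ℂ A] [SMulCommClass ℂ A A] [IsScalarTower ℂ A A]

set_option linter.unusedSectionVars false

lemma aux_mul_helper (c d : ℂ) (s t : A) :
    ((inl c + (s : Unitization ℂ A)) * (inl d + (t : Unitization ℂ A)))
      = inl (c * d) + ((c • t + d • s + s * t : A) : Unitization ℂ A) := by
  rw [add_mul, mul_add, mul_add, inl_mul_inl, inl_mul_inr, inr_mul_inl, ← inr_mul,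
    inr_add, inr_add]
  abel

lemma aux_isIntegral (halg : IsAlgebraicAlgebra A) (x : A) :
    IsIntegral ℂ (x : Unitization ℂ A) := by
  obtain ⟨S, hxS, hfd⟩ := halg x
  let f : (ℂ × S) →ₗ[ℂ] Unitization ℂ A :=
    { toFun := fun p => inl p.1 + ((p.2 : A) : Unitization ℂ A)
      map_add' := by
        intro p q
        simp only [Prod.fst_add, Prod.snd_add, inl_add, NonUnitalSubalgebra.coe_add, inr_add]
        abel
      map_smul' := by
        intro c p
        simp only [Prod.smul_fst, Prod.smul_snd, inl_smul, SetLike.val_smul, inr_smul,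
          smul_add, RingHom.id_apply] }
  let P : Submodule ℂ (Unitization ℂ A) := LinearMap.range f
  have h1 : (1 : Unitization ℂ A) ∈ P := ⟨(1, 0), by simp [f]⟩
  have hmul : ∀ u v : Unitization ℂ A, u ∈ P → v ∈ P → u * v ∈ P := by
    rintro _ _ ⟨⟨c, s⟩, rfl⟩ ⟨⟨d, t⟩, rfl⟩
    refine ⟨(c * d, ⟨c • (t : A) + d • (s : A) + (s : A) * (t : A), ?_⟩), ?_⟩
    · exact S.add_mem (S.add_mem (SMulMemClass.smul_mem c t.2) (SMulMemClass.smul_mem d s.2))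
        (S.mul_mem s.2 t.2)
    · simpa [f] using (aux_mul_helper c d (s : A) (t : A)).symm
  let T : Subalgebra ℂ (Unitization ℂ A) := P.toSubalgebra h1 hmul
  have hPfg : P.FG := by
    have : FiniteDimensional ℂ P := inferInstance
    exact (Submodule.fg_top P).mp (Module.finite_def.mp this)
  have hmem : (x : Unitization ℂ A) ∈ T := ⟨(0, ⟨x, hxS⟩), by simp [f]⟩
  exact IsIntegral.of_mem_of_fg T hPfg _ hmem


variable [StarRing A] [StarModule ℂ A]

lemma aux_nilpotent_selfadjoint (hproper : HasProperInvolution A) :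
    ∀ n : ℕ, 0 < n → ∀ b : A, star b = b → (b : Unitization ℂ A) ^ n = 0 → b = 0 := by
  intro n
  induction n using Nat.strong_induction_on with
  | _ n ih =>
    intro hn b hb hbn
    by_cases h1 : n = 1
    · subst h1
      rw [pow_one] at hbn
      exact Unitization.inr_injective (R := ℂ) hbn
    · have hn2 : 2 ≤ n := by omega
      set m := (n + 1) / 2 with hm
      have hm1 : 0 < m := by omega
      have hmn : m < n := by omega
      have h2m : n ≤ 2 * m := by omega
      set b' : Unitization ℂ A := (b : Unitization ℂ A) with hb'
      have h2 : b' ^ (2 * m) = 0 := by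
        rw [show 2 * m = n + (2 * m - n) by omega, pow_add, hbn, zero_mul]
      have hfst : (b' ^ m).fst = 0 := by
        rw [← Unitization.fstHom_apply ℂ A, map_pow, Unitization.fstHom_apply, hb',
          Unitization.fst_inr, zero_pow (by omega)]
      set c : A := (b' ^ m).snd with hc
      have hyc : b' ^ m = (c : Unitization ℂ A) := by
        conv_lhs => rw [← Unitization.inl_fst_add_inr_snd_eq (b' ^ m)]
        rw [hfst, Unitization.inl_zero, zero_add]
      have hstar : star b' = b' := by rw [hb', ← Unitization.inr_star, hb]
      have hcc : star c * c = 0 := by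
        apply Unitization.inr_injective (R := ℂ)
        rw [Unitization.inr_mul, Unitization.inr_star, ← hyc, star_pow, hstar,
          ← pow_add, Unitization.inr_zero]
        rw [show m + m = 2 * m by ring, h2]
      have hc0 : c = 0 := hproper c hcc
      have : b' ^ m = 0 := by rw [hyc, hc0, Unitization.inr_zero]
      exact ih m hmn hm1 b hb this


theorem part1 (halg : IsAlgebraicAlgebra A) (hproper : HasProperInvolution A)
    (a : A) (ha : star a = a) : ∀ z ∈ spectrum ℂ (a : Unitization ℂ A), z.im = 0 := by
  intro z hz
  by_contra him
  classical
  have hz0 : z ≠ 0 := fun h => him (by rw [h]; rfl)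
  set a' : Unitization ℂ A := (a : Unitization ℂ A) with ha'
  have hint : IsIntegral ℂ a' := aux_isIntegral halg a
  set p := minpoly ℂ a' with hp
  have hp0 : p ≠ 0 := minpoly.ne_zero hint
  have hpa : aeval a' p = 0 := minpoly.aeval ℂ a'
  -- z is a root of p
  have hroot : p.IsRoot z := by
    have h1 : eval z p ∈ spectrum ℂ (aeval a' p) :=
      spectrum.subset_polynomial_aeval a' p ⟨z, hz, rfl⟩
    rw [hpa, spectrum.zero_eq] at h1
    exact h1
  obtain ⟨q, hpq, hqnd⟩ := p.exists_eq_pow_rootMultiplicity_mul_and_not_dvd hp0 z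
  set m := p.rootMultiplicity z with hmdef
  have hm : 0 < m := (p.rootMultiplicity_pos hp0).mpr hroot
  have hq0 : q ≠ 0 := by rintro rfl; rw [mul_zero] at hpq; exact hp0 hpq
  have hqa : aeval a' q ≠ 0 := by
    intro h
    have hle := minpoly.degree_le_of_ne_zero ℂ a' hq0 h
    have hXz : ((X : ℂ[X]) - C z) ^ m ≠ 0 := pow_ne_zero _ (X_sub_C_ne_zero z)
    have hdeg : p.natDegree = m + q.natDegree := by
      rw [hpq, natDegree_mul hXz hq0, natDegree_pow, natDegree_X_sub_C, mul_one]
    rw [degree_eq_natDegree hq0, ← hp, degree_eq_natDegree hp0, Nat.cast_le] at hle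
    omega
  set qa := aeval a' q with hqadef
  set cz : Unitization ℂ A := algebraMap ℂ (Unitization ℂ A) z with hcz
  have hfac : (a' - cz) ^ m * qa = 0 := by
    have h2 := hpa
    rw [hpq, map_mul, map_pow, map_sub, aeval_X, aeval_C] at h2
    exact h2
  have hex : ∃ j, (a' - cz) ^ j * qa = 0 := ⟨m, hfac⟩
  set k := Nat.find hex with hkdef
  have hk : (a' - cz) ^ k * qa = 0 := Nat.find_spec hex
  have hk0 : k ≠ 0 := by
    intro h
    rw [h, pow_zero, one_mul] at hk
    exact hqa hk
  set y : Unitization ℂ A := (a' - cz) ^ (k - 1) * qa with hydef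
  have hy0 : y ≠ 0 := Nat.find_min hex (by omega)
  have hay : a' * y = z • y := by
    have h3 : (a' - cz) * y = 0 := by
      rw [hydef, ← mul_assoc, ← pow_succ', show k - 1 + 1 = k by omega, hk]
    have h4 : a' * y = cz * y := by
      have := sub_eq_zero.mp (by rwa [sub_mul] at h3)
      exact this
    rw [h4, hcz, ← Algebra.smul_def]
  have hyfst : y.fst = 0 := by
    have h5 := congrArg (fun x : Unitization ℂ A => x.fst) hay
    rw [Unitization.fst_mul, Unitization.fst_smul, ha', Unitization.fst_inr, zero_mul] at h5
    have h6 : z • y.fst = 0 := h5.symm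
    rw [smul_eq_mul] at h6
    rcases mul_eq_zero.mp h6 with h | h
    · exact absurd h hz0
    · exact h
  set v : A := y.snd with hvdef
  have hyv : y = (v : Unitization ℂ A) := by
    conv_lhs => rw [← Unitization.inl_fst_add_inr_snd_eq y]
    rw [hyfst, Unitization.inl_zero, zero_add]
  have hv0 : v ≠ 0 := by
    intro h
    apply hy0
    rw [hyv, h, Unitization.inr_zero]
  have hav : a * v = z • v := by
    apply Unitization.inr_injective (R := ℂ)
    rw [Unitization.inr_mul, ← ha', ← hyv, hay, hyv, ← Unitization.inr_smul]
  have hsv : star v * a = star z • star v := by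
    have h6 := congrArg star hav
    rwa [star_mul, ha, star_smul] at h6
  set w : A := star v * v with hwdef
  have h7 : z • w = star z • w := by
    have e1 : star v * (a * v) = z • w := by rw [hav, mul_smul_comm]
    have e2 : star v * a * v = star z • w := by rw [hsv, smul_mul_assoc]
    rw [← e1, ← mul_assoc, e2]
  have hzz : z - star z ≠ 0 := by
    intro h
    apply him
    have := congrArg Complex.im h
    simp only [Complex.sub_im, Complex.star_def, Complex.conj_im, Complex.zero_im] at this
    linarith
  have hw0 : w = 0 := by
    have h8 : (z - star z) • w = 0 := by rw [sub_smul, h7, sub_self]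
    rcases smul_eq_zero.mp h8 with h | h
    · exact absurd h hzz
    · exact h
  exact hv0 (hproper v hw0)


theorem part2 (halg : IsAlgebraicAlgebra A) (hproper : HasProperInvolution A)
    (a : A) (haJ : (a : Unitization ℂ A) ∈ (⊥ : Ideal (Unitization ℂ A)).jacobson) :
    a = 0 := by
  classical
  set b : A := star a * a with hbdef
  have hbsa : star b = b := by rw [hbdef, star_mul, star_star]
  set b' : Unitization ℂ A := (b : Unitization ℂ A) with hb'
  have hbJ : b' ∈ (⊥ : Ideal (Unitization ℂ A)).jacobson := by
    rw [hb', hbdef, Unitization.inr_mul]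
    exact Ideal.mul_mem_left _ _ haJ
  have hint : IsIntegral ℂ b' := aux_isIntegral halg b
  set p := minpoly ℂ b' with hp
  have hp0 : p ≠ 0 := minpoly.ne_zero hint
  have hpa : aeval b' p = 0 := minpoly.aeval ℂ b'
  obtain ⟨q, hpq, hqnd⟩ := p.exists_eq_pow_rootMultiplicity_mul_and_not_dvd hp0 0
  set k := p.rootMultiplicity 0 with hkdef
  have hq00 : q.coeff 0 ≠ 0 := by
    intro h
    exact hqnd (by rw [C_0, sub_zero]; exact X_dvd_iff.mpr h)
  set c0 : ℂ := q.coeff 0 with hc0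
  have hfac : b' ^ k * aeval b' q = 0 := by
    have h2 := hpa
    rw [hpq] at h2
    simp only [map_mul, map_pow, map_sub, aeval_X, aeval_C, map_zero, sub_zero] at h2
    exact h2
  -- decompose aeval b' q
  have hqdec : aeval b' q = aeval b' q.divX * b' + algebraMap ℂ (Unitization ℂ A) c0 := by
    conv_lhs => rw [← q.X_mul_divX_add]
    rw [map_add, aeval_C, mul_comm (X : ℂ[X]) q.divX, map_mul, aeval_X]
  set w : Unitization ℂ A := aeval b' q.divX * b' with hwdef
  have hwJ : w ∈ (⊥ : Ideal (Unitization ℂ A)).jacobson :=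
    Ideal.mul_mem_left _ _ hbJ
  set u : Unitization ℂ A := c0⁻¹ • w with hudef
  have huJ : u ∈ (⊥ : Ideal (Unitization ℂ A)).jacobson :=
    by rw [hudef, Algebra.smul_def]; exact Ideal.mul_mem_left _ _ hwJ
  have hkey : b' ^ k * (1 + u) = 0 := by
    have hfac' : b' ^ k * (w + algebraMap ℂ (Unitization ℂ A) c0) = 0 := by
      rw [← hqdec]
      exact hfac
    have hone : c0⁻¹ • (algebraMap ℂ (Unitization ℂ A) c0) = 1 := by
      rw [Algebra.smul_def, ← map_mul, inv_mul_cancel₀ hq00, map_one]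
    have h4 : (1 : Unitization ℂ A) + u
        = c0⁻¹ • (w + algebraMap ℂ (Unitization ℂ A) c0) := by
      rw [smul_add, hone, hudef, add_comm]
    rw [h4, mul_smul_comm, hfac', smul_zero]
  have hunit : IsUnit (1 + u) := aux_isUnit_one_add huJ
  have hbk : b' ^ k = 0 := by
    rcases hunit with ⟨e, he⟩
    calc b' ^ k = b' ^ k * (1 + u) * ↑e⁻¹ := by rw [← he, Units.mul_inv_cancel_right]
    _ = 0 := by rw [hkey, zero_mul]
  have hk0 : k ≠ 0 := by
    intro h
    rw [h, pow_zero] at hbk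
    exact one_ne_zero hbk
  have hb0 : b = 0 := aux_nilpotent_selfadjoint hproper k (by omega) b hbsa hbk
  exact hproper a (by rw [← hbdef, hb0])


end AuxProofs

/-- An algebraic complex `*`-algebra with proper involution is hermitian
and semisimple. -/
theorem hermitian_and_semisimple_of_properInvolution (A : Type*) [NonUnitalRing A]
    [Module ℂ A] [SMulCommClass ℂ A A] [IsScalarTower ℂ A A] [StarRing A] [StarModule ℂ A]
    (halg : IsAlgebraicAlgebra A) (hproper : HasProperInvolution A) :
    IsHermitianStarAlgebra A ∧ IsSemisimpleAlgebra A := by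
  exact ⟨fun a ha z hz => part1 halg hproper a ha z hz,
    fun a h => part2 halg hproper a h⟩
end

section
/- Let A be a complex *-algebra that is algebraic and admits a pre-C*-norm. Then every nonzero selfadjoint element b of A can be written as a finite sum b = Σ_{j∈J} λ_j e_j, where the λ_j are finitely many distinct nonzero real numbers and the e_j are nonzero pairwise orthogonal projections in A. -/
open Polynomial Unitization in
private lemma aux_sa_nil {A : Type*} [NonUnitalRing A] [Module ℂ A]
    [SMulCommClass ℂ A A] [IsScalarTower ℂ A A] [StarRing A] [StarModule ℂ A]
    (σ : A → ℝ) (h0 : ∀ a, σ a = 0 ↔ a = 0) (hst : ∀ a : A, σ (star a * a) = σ a ^ 2)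
    (c : A) (hc : star c = c) (n : ℕ) (hn : (c : Unitization ℂ A) ^ (n + 1) = 0) : c = 0 := by
  let d : ℕ → A := fun k => Nat.rec c (fun _ x => x * x) k
  have hd0 : d 0 = c := rfl
  have hdS : ∀ k, d (k + 1) = d k * d k := fun k => rfl
  have H1 : ∀ k, (Unitization.inr (d k) : Unitization ℂ A) = (c : Unitization ℂ A) ^ (2 ^ k) := by
    intro k; induction k with
    | zero => simp [hd0]
    | succ k ih =>
      rw [hdS, Unitization.inr_mul, ih, pow_succ, pow_mul, sq]
  have H2 : ∀ k, star (d k) = d k := by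
    intro k; induction k with
    | zero => simpa [hd0] using hc
    | succ k ih => rw [hdS, star_mul, ih]
  have H3 : ∀ k, σ (d k) = σ c ^ 2 ^ k := by
    intro k; induction k with
    | zero => simp [hd0]
    | succ k ih =>
      calc σ (d (k + 1)) = σ (star (d k) * d k) := by rw [hdS, H2]
        _ = σ (d k) ^ 2 := hst _
        _ = σ c ^ 2 ^ (k + 1) := by rw [ih]; ring
  have hk : (Unitization.inr (d (n + 1)) : Unitization ℂ A) = 0 := by
    rw [H1 (n + 1)]
    have hle : n + 1 ≤ 2 ^ (n + 1) := (Nat.lt_two_pow_self (n := n + 1)).le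
    obtain ⟨m, hm⟩ := Nat.exists_eq_add_of_le hle
    rw [hm, pow_add, hn, zero_mul]
  have hdz : d (n + 1) = 0 := by
    have := Unitization.inr_injective (R := ℂ) (hk.trans (Unitization.inr_zero ℂ).symm)
    exact this
  have : σ c ^ 2 ^ (n + 1) = 0 := by rw [← H3, hdz]; exact (h0 0).mpr rfl
  have : σ c = 0 := pow_eq_zero_iff (n := 2 ^ (n + 1)) (by positivity) |>.mp this
  exact (h0 c).mp this

open Polynomial Unitization in
private lemma aux_nil {A : Type*} [NonUnitalRing A] [Module ℂ A]
    [SMulCommClass ℂ A A] [IsScalarTower ℂ A A] [StarRing A] [StarModule ℂ A]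
    (σ : A → ℝ) (h0 : ∀ a, σ a = 0 ↔ a = 0) (hst : ∀ a : A, σ (star a * a) = σ a ^ 2)
    (a : A) (hcomm : star a * a = a * star a) (n : ℕ)
    (hn : (a : Unitization ℂ A) ^ (n + 1) = 0) : a = 0 := by
  have hcomm' : Commute (star (a : Unitization ℂ A)) (a : Unitization ℂ A) := by
    show _ = _
    rw [← Unitization.inr_star, ← Unitization.inr_mul, ← Unitization.inr_mul, hcomm]
  have hc : star (star a * a) = star a * a := by rw [star_mul, star_star]
  have hnil : ((star a * a : A) : Unitization ℂ A) ^ (n + 1) = 0 := by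
    rw [Unitization.inr_mul, Unitization.inr_star, hcomm'.mul_pow, hn, mul_zero]
  have := aux_sa_nil σ h0 hst (star a * a) hc n hnil
  have hσ : σ a ^ 2 = 0 := by rw [← hst, this]; exact (h0 0).mpr rfl
  exact (h0 a).mp (pow_eq_zero_iff two_ne_zero |>.mp hσ)

open Unitization in
private lemma inr_sum {A : Type*} [NonUnitalRing A] [Module ℂ A]
    [SMulCommClass ℂ A A] [IsScalarTower ℂ A A] {ι : Type*} (s : Finset ι) (g : ι → A) :
    (Unitization.inr (∑ i ∈ s, g i) : Unitization ℂ A)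
      = ∑ i ∈ s, (Unitization.inr (g i) : Unitization ℂ A) := by
  classical
  induction s using Finset.induction_on with
  | empty => simp
  | insert a s h ih => rw [Finset.sum_insert h, Finset.sum_insert h, Unitization.inr_add, ih]


/-- `b` is a finite real-linear combination `b = ∑ j, λ j • e j` of nonzero pairwise
orthogonal projections `e j` with distinct nonzero real coefficients `λ j`. -/
def HasSpectralDecomposition {A : Type*} [NonUnitalRing A] [Module ℂ A] [Star A]
    (b : A) : Prop :=
  ∃ (n : ℕ) (lam : Fin n → ℝ) (e : Fin n → A),
    Function.Injective lam ∧ (∀ j, lam j ≠ 0) ∧ (∀ j, e j ≠ 0) ∧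
    (∀ j, star (e j) = e j ∧ e j * e j = e j) ∧
    (∀ j k, j ≠ k → e j * e k = 0) ∧
    b = ∑ j, (lam j : ℂ) • e j

open Polynomial Unitization

/-- In an algebraic complex `*`-algebra with a pre-C*-norm, every nonzero
selfadjoint element is a finite linear combination of nonzero pairwise orthogonal
projections with distinct nonzero real coefficients. -/
theorem spectralDecomposition_of_preCstarNorm (A : Type*) [NonUnitalRing A] [Module ℂ A]
    [SMulCommClass ℂ A A] [IsScalarTower ℂ A A] [StarRing A] [StarModule ℂ A]
    (halg : IsAlgebraicAlgebra A) (hnorm : HasPreCstarNorm A) :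
    ∀ b : A, star b = b → b ≠ 0 → HasSpectralDecomposition b := by
  classical
  intro b hb hb0
  obtain ⟨σ, h0, hsm, hadd, hmul, hst⟩ := hnorm
  obtain ⟨S, hbS, hSfin⟩ := halg b
  set u : Unitization ℂ A := (b : Unitization ℂ A) with hu_def
  have hu : star u = u := by rw [hu_def, ← Unitization.inr_star, hb]
  -- powers of b
  let d : ℕ → A := fun k => Nat.rec b (fun _ x => x * b) k
  have hdS : ∀ k, d (k + 1) = d k * b := fun _ => rfl
  have hdmem : ∀ k, d k ∈ S := by
    intro k; induction k with
    | zero => exact hbS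
    | succ k ih => exact mul_mem ih hbS
  have hdpow : ∀ k, (Unitization.inr (d k) : Unitization ℂ A) = u ^ (k + 1) := by
    intro k; induction k with
    | zero => rw [pow_one]; rfl
    | succ k ih => rw [hdS, Unitization.inr_mul, ih, ← hu_def, ← pow_succ]
  -- u is integral over ℂ
  have hint : IsIntegral ℂ u := by
    set N := Module.finrank ℂ S with hN
    have hw : ¬ LinearIndependent ℂ (fun i : Fin (N + 1) => (⟨d i, hdmem i⟩ : S)) := by
      intro hli
      have := hli.fintype_card_le_finrank
      rw [Fintype.card_fin] at this
      omega
    rw [Fintype.not_linearIndependent_iff] at hw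
    obtain ⟨g, hrel, i0, hgi0⟩ := hw
    have hrel' : ∑ i : Fin (N + 1), g i • d i = 0 := by
      have := congrArg (Subtype.val) hrel
      simpa using this
    refine IsAlgebraic.isIntegral ⟨∑ i : Fin (N + 1), C (g i) * X ^ ((i : ℕ) + 1), ?_, ?_⟩
    · intro h
      have hc : (∑ i : Fin (N + 1), C (g i) * X ^ ((i : ℕ) + 1)).coeff ((i0 : ℕ) + 1) = g i0 := by
        rw [finset_sum_coeff]
        rw [Finset.sum_eq_single i0]
        · simp [coeff_C_mul, coeff_X_pow]
        · intro j _ hj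
          have hne : ((j : ℕ) + 1 : ℕ) ≠ (i0 : ℕ) + 1 := by
            simpa [Fin.ext_iff] using hj
          simp only [coeff_C_mul, coeff_X_pow]
          rw [if_neg (fun hh => hne hh.symm), mul_zero]
        · simp
      rw [h] at hc
      simp only [coeff_zero] at hc
      exact hgi0 hc.symm
    · rw [map_sum]
      have : ∀ i : Fin (N + 1), aeval u (C (g i) * X ^ ((i : ℕ) + 1))
          = Unitization.inr (g i • d i) := by
        intro i
        rw [map_mul, aeval_C, map_pow, aeval_X, ← hdpow, ← Algebra.smul_def,
          Unitization.inr_smul]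
      rw [Finset.sum_congr rfl fun i _ => this i, ← inr_sum, hrel']
      exact Unitization.inr_zero ℂ
  set m : ℂ[X] := minpoly ℂ u with hm_def
  have hm0 : m ≠ 0 := minpoly.ne_zero hint
  have hmonic : m.Monic := minpoly.monic hint
  -- star and aeval
  have staraeval : ∀ p : ℂ[X], star (aeval u p) = aeval u (p.map (starRingEnd ℂ)) := by
    intro p
    induction p using Polynomial.induction_on' with
    | add p q hp hq => rw [map_add, star_add, hp, hq, Polynomial.map_add, map_add]
    | monomial n a =>
      rw [aeval_monomial, Polynomial.map_monomial, aeval_monomial, star_mul, star_pow, hu,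
        ← algebraMap_star_comm]
      rw [Complex.star_def]
      exact (Algebra.commutes _ _).symm
  have evalconj : ∀ (p : ℂ[X]) (z : ℂ),
      (p.map (starRingEnd ℂ)).eval z = (starRingEnd ℂ) (p.eval ((starRingEnd ℂ) z)) := by
    intro p z
    conv_lhs => rw [show z = (starRingEnd ℂ) ((starRingEnd ℂ) z) from (Complex.conj_conj z).symm]
    rw [eval_map]
    exact eval₂_hom _ _
  have hmmap : m = m.map (starRingEnd ℂ) := by
    have hdvd : m ∣ m.map (starRingEnd ℂ) :=
      minpoly.dvd ℂ u (by rw [← staraeval, minpoly.aeval, star_zero])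
    exact Polynomial.eq_of_dvd_of_natDegree_le_of_leadingCoeff hdvd
      (by rw [natDegree_map])
      (by rw [(hmonic.map (starRingEnd ℂ)).leadingCoeff, hmonic.leadingCoeff])
  have hconjroot : ∀ z, m.IsRoot z → m.IsRoot ((starRingEnd ℂ) z) := by
    intro z hz
    have : m.eval ((starRingEnd ℂ) z) = (starRingEnd ℂ) (m.eval ((starRingEnd ℂ) ((starRingEnd ℂ) z))) := by
      conv_lhs => rw [hmmap]
      exact evalconj m _
    rw [Complex.conj_conj] at this
    rw [IsRoot, this, hz.eq_zero, map_zero]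
  -- the nonzero roots
  set Λ : Finset ℂ := m.roots.toFinset.erase 0 with hΛ_def
  set Λ0 : Finset ℂ := insert (0 : ℂ) Λ with hΛ0_def
  have h0Λ0 : (0 : ℂ) ∈ Λ0 := Finset.mem_insert_self _ _
  have hΛroot : ∀ ν ∈ Λ, m.IsRoot ν := by
    intro ν hν
    have := Finset.mem_of_mem_erase hν
    rw [Multiset.mem_toFinset] at this
    exact isRoot_of_mem_roots this
  have hΛne : ∀ ν ∈ Λ, ν ≠ 0 := fun ν hν => Finset.ne_of_mem_erase hν
  have hrootΛ0 : ∀ z, m.IsRoot z → z ∈ Λ0 := by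
    intro z hz
    by_cases h : z = 0
    · rw [h]; exact h0Λ0
    · exact Finset.mem_insert_of_mem (Finset.mem_erase.mpr
        ⟨h, Multiset.mem_toFinset.mpr ((mem_roots hm0).mpr hz)⟩)
  set q : ℂ[X] := ∏ z ∈ Λ0, (X - C z) with hq_def
  have qdvd : ∀ g : ℂ[X], (∀ z ∈ Λ0, g.eval z = 0) → q ∣ g := by
    intro g hg
    apply Finset.prod_dvd_of_coprime
    · intro x hx y hy hxy
      exact Polynomial.pairwise_coprime_X_sub_C (Function.injective_id) hxy
    · exact fun z hz => dvd_iff_isRoot.mpr (hg z hz)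
  -- q(u) is nilpotent, hence zero
  have hmdvd : m ∣ q ^ (Multiset.card m.roots) := by
    have key : ∀ M : Multiset ℂ, (∀ z ∈ M, (X - C z) ∣ q) →
        (M.map fun z => X - C z).prod ∣ q ^ (Multiset.card M) := by
      intro M
      induction M using Multiset.induction_on with
      | empty => simp
      | cons z M ih =>
        intro h
        rw [Multiset.map_cons, Multiset.prod_cons, Multiset.card_cons, pow_succ']
        exact mul_dvd_mul (h z (Multiset.mem_cons_self z M))
          (ih fun w hw => h w (Multiset.mem_cons_of_mem hw))
    have hsplit : m = (m.roots.map fun z => X - C z).prod :=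
      (IsAlgClosed.splits _).eq_prod_roots_of_monic hmonic
    calc m = (m.roots.map fun z => X - C z).prod := hsplit
      _ ∣ q ^ (Multiset.card m.roots) := key m.roots fun z hz =>
          Finset.dvd_prod_of_mem _ (hrootΛ0 z (isRoot_of_mem_roots hz))
  have hNpos : 0 < Multiset.card m.roots := by
    have hNdeg : Multiset.card m.roots = m.natDegree :=
      (splits_iff_card_roots).mp (IsAlgClosed.splits m)
    rw [hNdeg]
    exact minpoly.natDegree_pos hint
  have hqpow : (aeval u q) ^ (Multiset.card m.roots) = 0 := by
    obtain ⟨t, ht⟩ := hmdvd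
    rw [← map_pow, ht, map_mul, minpoly.aeval, zero_mul]
  -- elements with zero constant term land in A
  have toA : ∀ p : ℂ[X], p.eval 0 = 0 →
      (Unitization.inr ((aeval u p).snd) : Unitization ℂ A) = aeval u p := by
    intro p hp
    have h1 : (aeval u p).fst = aeval ((Unitization.fstHom ℂ A) u) p :=
      (Polynomial.aeval_algHom_apply (Unitization.fstHom ℂ A) u p).symm
    have h2 : (Unitization.fstHom ℂ A) u = 0 := Unitization.fst_inr ℂ b
    have hfst : (aeval u p).fst = 0 := by
      rw [h1, h2]
      rw [show (aeval (0 : ℂ)) p = p.eval 0 from by rw [← coe_aeval_eq_eval]]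
      exact hp
    have := Unitization.inl_fst_add_inr_snd_eq (aeval u p)
    rw [hfst, Unitization.inl_zero, zero_add] at this
    exact this
  have hqeval0 : q.eval 0 = 0 := by
    rw [hq_def, eval_prod]
    exact Finset.prod_eq_zero h0Λ0 (by simp)
  have hq0 : aeval u q = 0 := by
    set x : Unitization ℂ A := aeval u q with hx_def
    set a : A := x.snd with ha_def
    have hxa : (Unitization.inr a : Unitization ℂ A) = x := toA q hqeval0
    have hcommU : star x * x = x * star x := by
      rw [staraeval, ← map_mul, ← map_mul, mul_comm]
    have hcommA : star a * a = a * star a := by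
      apply Unitization.inr_injective (R := ℂ)
      rw [Unitization.inr_mul, Unitization.inr_mul, Unitization.inr_star, hxa, hcommU]
    have hxpow : (Unitization.inr a : Unitization ℂ A) ^ ((Multiset.card m.roots - 1) + 1) = 0 := by
      rw [hxa, Nat.sub_add_cancel hNpos]
      exact hqpow
    have ha0 : a = 0 := aux_nil σ h0 hst a hcommA _ hxpow
    rw [← hxa, ha0, Unitization.inr_zero]
  -- Lagrange idempotents
  set D : ℂ → ℂ := fun ν => ∏ z ∈ Λ0.erase ν, (ν - z) with hD_def
  set f : ℂ → ℂ[X] := fun ν => C (D ν)⁻¹ * ∏ z ∈ Λ0.erase ν, (X - C z) with hf_def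
  have hDne : ∀ ν ∈ Λ, D ν ≠ 0 := by
    intro ν hν
    refine Finset.prod_ne_zero_iff.mpr fun z hz => ?_
    exact sub_ne_zero.mpr (Ne.symm (Finset.ne_of_mem_erase hz))
  have hfself : ∀ ν ∈ Λ, (f ν).eval ν = 1 := by
    intro ν hν
    rw [hf_def]
    simp only [eval_mul, eval_C, eval_prod, eval_sub, eval_X]
    exact inv_mul_cancel₀ (hDne ν hν)
  have hfzero : ∀ ν ∈ Λ, ∀ z ∈ Λ0, z ≠ ν → (f ν).eval z = 0 := by
    intro ν hν z hz hne
    rw [hf_def]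
    simp only [eval_mul, eval_C, eval_prod, eval_sub, eval_X]
    rw [Finset.prod_eq_zero (Finset.mem_erase.mpr ⟨hne, hz⟩) (sub_self z), mul_zero]
  have hf0 : ∀ ν ∈ Λ, (f ν).eval 0 = 0 := fun ν hν =>
    hfzero ν hν 0 h0Λ0 (Ne.symm (hΛne ν hν))
  have hidem : ∀ ν ∈ Λ, aeval u (f ν) * aeval u (f ν) = aeval u (f ν) := by
    intro ν hν
    obtain ⟨t, ht⟩ : q ∣ f ν * f ν - f ν := by
      apply qdvd
      intro z hz
      by_cases hzv : z = ν
      · rw [eval_sub, eval_mul, hzv, hfself ν hν]; ring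
      · rw [eval_sub, eval_mul, hfzero ν hν z hz hzv]; ring
    have h2 : aeval u (f ν) * aeval u (f ν) - aeval u (f ν) = 0 := by
      rw [← map_mul, ← map_sub, ht, map_mul, hq0, zero_mul]
    exact sub_eq_zero.mp h2
  have horth : ∀ ν ∈ Λ, ∀ ν' ∈ Λ, ν ≠ ν' → aeval u (f ν) * aeval u (f ν') = 0 := by
    intro ν hν ν' hν' hne
    obtain ⟨t, ht⟩ : q ∣ f ν * f ν' := by
      apply qdvd
      intro z hz
      by_cases hzv : z = ν
      · rw [eval_mul, hzv, hfzero ν' hν' ν (hzv ▸ hz) hne, mul_zero]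
      · rw [eval_mul, hfzero ν hν z hz hzv, zero_mul]
    have h2 : aeval u (f ν) * aeval u (f ν') = aeval u q * aeval u t := by
      rw [← map_mul, ht, map_mul]
    rw [h2, hq0, zero_mul]
  have hne0 : ∀ ν ∈ Λ, aeval u (f ν) ≠ 0 := by
    intro ν hν h
    obtain ⟨t, ht⟩ := minpoly.dvd ℂ u h
    have : (f ν).eval ν = 0 := by
      rw [ht, eval_mul, (hΛroot ν hν).eq_zero, zero_mul]
    rw [hfself ν hν] at this
    exact one_ne_zero this
  -- realness of the roots
  have hreal : ∀ ν ∈ Λ, (starRingEnd ℂ) ν = ν := by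
    intro ν hν
    by_contra hne
    have hconjmem : (starRingEnd ℂ) ν ∈ Λ0 := hrootΛ0 _ (hconjroot ν (hΛroot ν hν))
    obtain ⟨t, ht⟩ : q ∣ (f ν).map (starRingEnd ℂ) * f ν := by
      apply qdvd
      intro z hz
      by_cases hzv : z = ν
      · rw [eval_mul, hzv, evalconj, hfzero ν hν _ hconjmem hne, map_zero, zero_mul]
      · rw [eval_mul, hfzero ν hν z hz hzv, mul_zero]
    have hzero : star (aeval u (f ν)) * aeval u (f ν) = 0 := by
      rw [staraeval, ← map_mul, ht, map_mul, hq0, zero_mul]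
    have hE := toA (f ν) (hf0 ν hν)
    have hEE : star ((aeval u (f ν)).snd) * (aeval u (f ν)).snd = 0 := by
      apply Unitization.inr_injective (R := ℂ)
      rw [Unitization.inr_mul, Unitization.inr_star, hE, hzero, Unitization.inr_zero]
    have h2 : σ ((aeval u (f ν)).snd) ^ 2 = 0 := by
      rw [← hst, hEE]; exact (h0 0).mpr rfl
    have h3 : (aeval u (f ν)).snd = 0 :=
      (h0 _).mp (pow_eq_zero_iff two_ne_zero |>.mp h2)
    exact hne0 ν hν (by rw [← hE, h3, Unitization.inr_zero])
  have hΛ0real : ∀ z ∈ Λ0, (starRingEnd ℂ) z = z := by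
    intro z hz
    rcases Finset.mem_insert.mp hz with h | h
    · rw [h, map_zero]
    · exact hreal z h
  have hDapp : ∀ ν, D ν = ∏ z ∈ Λ0.erase ν, (ν - z) := fun ν => by simp only [hD_def]
  have hfapp : ∀ ν, f ν = C (D ν)⁻¹ * ∏ z ∈ Λ0.erase ν, (X - C z) := fun ν => by
    simp only [hf_def]
  have hDconj : ∀ ν ∈ Λ, (starRingEnd ℂ) (D ν) = D ν := by
    intro ν hν
    rw [hDapp, map_prod]
    exact Finset.prod_congr rfl fun z hz => by
      rw [map_sub, hreal ν hν, hΛ0real z (Finset.mem_of_mem_erase hz)]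
  have hfconj : ∀ ν ∈ Λ, (f ν).map (starRingEnd ℂ) = f ν := by
    intro ν hν
    rw [hfapp, Polynomial.map_mul, Polynomial.map_C, map_inv₀, hDconj ν hν,
      Polynomial.map_prod]
    congr 1
    exact Finset.prod_congr rfl fun z hz => by
      rw [Polynomial.map_sub, Polynomial.map_X, Polynomial.map_C,
        hΛ0real z (Finset.mem_of_mem_erase hz)]
  have hstarf : ∀ ν ∈ Λ, star (aeval u (f ν)) = aeval u (f ν) := by
    intro ν hν
    rw [staraeval, hfconj ν hν]
  -- the sum formula
  have husum : u = ∑ ν ∈ Λ, ν • aeval u (f ν) := by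
    obtain ⟨t, ht⟩ : q ∣ X - ∑ ν ∈ Λ, C ν * f ν := by
      apply qdvd
      intro z hz
      rw [eval_sub, eval_X, eval_finset_sum]
      simp only [eval_mul, eval_C]
      rcases Finset.mem_insert.mp hz with h | h
      · subst h
        rw [Finset.sum_eq_zero, sub_zero]
        intro ν hν
        rw [hf0 ν hν, mul_zero]
      · rw [Finset.sum_eq_single z]
        · rw [hfself z h, mul_one, sub_self]
        · intro ν hν hνz
          rw [hfzero ν hν z hz (fun hh => hνz hh.symm), mul_zero]
        · intro hzz; exact absurd h hzz
    have h1 := congrArg (aeval u) ht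
    rw [map_mul, hq0, zero_mul, map_sub, aeval_X, map_sum, sub_eq_zero] at h1
    calc u = ∑ ν ∈ Λ, aeval u (C ν * f ν) := h1
      _ = ∑ ν ∈ Λ, ν • aeval u (f ν) :=
        Finset.sum_congr rfl fun ν hν => by rw [map_mul, aeval_C, Algebra.smul_def]
  -- assemble the data
  set n : ℕ := Λ.card with hn_def
  set μ : Fin n → ℂ := fun j => ((Λ.equivFin.symm j : ℂ)) with hμ_def
  have hμmem : ∀ j, μ j ∈ Λ := fun j => (Λ.equivFin.symm j).2
  have hμinj : Function.Injective μ := fun j k h =>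
    Λ.equivFin.symm.injective (Subtype.ext h)
  have hμre : ∀ j, ((μ j).re : ℂ) = μ j := fun j =>
    Complex.conj_eq_iff_re.mp (hreal _ (hμmem j))
  set E : Fin n → A := fun j => (aeval u (f (μ j))).snd with hE_def
  have hiE : ∀ j, (Unitization.inr (E j) : Unitization ℂ A) = aeval u (f (μ j)) :=
    fun j => toA _ (hf0 _ (hμmem j))
  refine ⟨n, fun j => (μ j).re, E, ?_, ?_, ?_, ?_, ?_, ?_⟩
  · intro j k h
    have h' : (μ j).re = (μ k).re := h
    apply hμinj
    rw [← hμre j, ← hμre k, h']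
  · intro j h
    have h' : (μ j).re = 0 := h
    apply hΛne _ (hμmem j)
    rw [← hμre j, h', Complex.ofReal_zero]
  · intro j h
    apply hne0 _ (hμmem j)
    rw [← hiE j, h, Unitization.inr_zero]
  · intro j
    constructor
    · apply Unitization.inr_injective (R := ℂ)
      rw [Unitization.inr_star, hiE j, hstarf _ (hμmem j)]
    · apply Unitization.inr_injective (R := ℂ)
      rw [Unitization.inr_mul, hiE j, hidem _ (hμmem j)]
  · intro j k hjk
    apply Unitization.inr_injective (R := ℂ)
    rw [Unitization.inr_mul, hiE j, hiE k, horth _ (hμmem j) _ (hμmem k)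
      (fun hh => hjk (hμinj hh)), Unitization.inr_zero]
  · apply Unitization.inr_injective (R := ℂ)
    have hL : (Unitization.inr b : Unitization ℂ A)
        = ∑ j : Fin n, μ j • aeval u (f (μ j)) := by
      rw [← hu_def]
      conv_lhs => rw [husum]
      rw [← Finset.sum_coe_sort Λ (fun ν => ν • aeval u (f ν))]
      exact (Equiv.sum_comp Λ.equivFin.symm
        (fun ν : ↥Λ => (ν : ℂ) • aeval u (f (ν : ℂ)))).symm
    rw [hL, inr_sum]
    refine Finset.sum_congr rfl fun j _ => ?_
    rw [Unitization.inr_smul, hiE j, hμre j]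
end

section
/- Let A be a complex *-algebra that is algebraic, and suppose every nonzero selfadjoint element b of A can be written as a finite sum b = Σ_{j∈J} λ_j e_j with finitely many distinct nonzero real numbers λ_j and nonzero pairwise orthogonal projections e_j in A. Then A is hermitian and semisimple. -/
section OrthoExpand

variable {B : Type*} [NonUnitalRing B] [Module ℂ B] [SMulCommClass ℂ B B] [IsScalarTower ℂ B B]

lemma aux_ortho_expand {n : ℕ} {E : Fin n → B}
    (hE : ∀ j k, E j * E k = if j = k then E j else 0) (μ ν : Fin n → ℂ) :
    (∑ j, μ j • E j) * (∑ k, ν k • E k) = ∑ j, (μ j * ν j) • E j := by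
  rw [Finset.sum_mul_sum]
  refine Finset.sum_congr rfl fun j _ => ?_
  rw [Finset.sum_eq_single j]
  · rw [smul_mul_smul_comm, hE, if_pos rfl]
  · intro k _ hk
    rw [smul_mul_smul_comm, hE, if_neg fun h => hk h.symm, smul_zero]
  · intro h; exact absurd (Finset.mem_univ j) h

lemma aux_mul_sum_left {n : ℕ} {E : Fin n → B}
    (hE : ∀ j k, E j * E k = if j = k then E j else 0) (j : Fin n) (c : Fin n → ℂ) :
    E j * (∑ k, c k • E k) = c j • E j := by
  rw [Finset.mul_sum, Finset.sum_eq_single j]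
  · rw [mul_smul_comm, hE, if_pos rfl]
  · intro k _ hk
    rw [mul_smul_comm, hE, if_neg fun h => hk h.symm, smul_zero]
  · intro h; exact absurd (Finset.mem_univ j) h

end OrthoExpand

section UnitLemma

variable {R : Type*} [Ring R] [Algebra ℂ R]

lemma aux_mul {n : ℕ} {E : Fin n → R}
    (hE : ∀ j k, E j * E k = if j = k then E j else 0) (d d' : ℂ) (c c' : Fin n → ℂ) :
    (d • (1 : R) + ∑ j, c j • E j) * (d' • (1 : R) + ∑ j, c' j • E j)
      = (d * d') • (1 : R) + ∑ j, (d * c' j + c j * d' + c j * c' j) • E j := by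
  have h1 : (d • (1:R)) * (d' • (1:R)) = (d * d') • (1:R) := by
    rw [smul_mul_smul_comm, one_mul]
  have h2 : (d • (1:R)) * (∑ j, c' j • E j) = ∑ j, (d * c' j) • E j := by
    rw [Finset.mul_sum]
    exact Finset.sum_congr rfl fun j _ => by rw [smul_mul_smul_comm, one_mul]
  have h3 : (∑ j, c j • E j) * (d' • (1:R)) = ∑ j, (c j * d') • E j := by
    rw [Finset.sum_mul]
    exact Finset.sum_congr rfl fun j _ => by rw [smul_mul_smul_comm, mul_one]
  rw [add_mul, mul_add, mul_add, aux_ortho_expand hE, h1, h2, h3, add_assoc]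
  congr 1
  rw [← Finset.sum_add_distrib, ← Finset.sum_add_distrib]
  refine Finset.sum_congr rfl fun j _ => ?_
  rw [add_smul, add_smul, add_assoc]

lemma aux_isUnit {n : ℕ} {E : Fin n → R}
    (hE : ∀ j k, E j * E k = if j = k then E j else 0) (μ : Fin n → ℂ) (z : ℂ)
    (hz : z ≠ 0) (hzμ : ∀ j, z + μ j ≠ 0) :
    IsUnit (z • (1 : R) + ∑ j, μ j • E j) := by
  set c : Fin n → ℂ := fun j => -μ j / (z * (z + μ j)) with hc
  have key : ∀ j, z * c j + μ j * z⁻¹ + μ j * c j = 0 := by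
    intro j
    have h1 := hzμ j
    simp only [hc]
    field_simp
    ring
  have key' : ∀ j, z⁻¹ * μ j + c j * z + c j * μ j = 0 := by
    intro j
    have := key j; linear_combination this
  refine ⟨⟨z • (1 : R) + ∑ j, μ j • E j, z⁻¹ • (1 : R) + ∑ j, c j • E j, ?_, ?_⟩, rfl⟩
  · rw [aux_mul hE]
    simp only [key, mul_inv_cancel₀ hz, zero_smul, Finset.sum_const_zero, add_zero, one_smul]
  · rw [aux_mul hE]
    simp only [key', inv_mul_cancel₀ hz, zero_smul, Finset.sum_const_zero, add_zero, one_smul]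

lemma aux_not_isUnit_of_ann {x u : R} (hx : x ≠ 0) (h : x * u = 0) : ¬ IsUnit u := by
  rintro ⟨v, rfl⟩
  apply hx
  calc x = x * (↑v * ↑v⁻¹) := by rw [Units.mul_inv, mul_one]
  _ = (x * ↑v) * ↑v⁻¹ := by rw [mul_assoc]
  _ = 0 := by rw [h, zero_mul]

lemma aux_idem_jacobson {x : R} (hx : x * x = x)
    (hrad : x ∈ (⊥ : Ideal R).jacobson) : x = 0 := by
  by_cases hI : Ideal.span {1 - x} = ⊤
  · have h1 : (1 : R) ∈ Ideal.span {1 - x} := hI ▸ Submodule.mem_top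
    obtain ⟨u, hu⟩ := Submodule.mem_span_singleton.mp h1
    rw [smul_eq_mul] at hu
    calc x = 1 * x := (one_mul x).symm
    _ = (u * (1 - x)) * x := by rw [hu]
    _ = u * (x - x * x) := by rw [mul_assoc, sub_mul, one_mul]
    _ = 0 := by rw [hx, sub_self, mul_zero]
  · obtain ⟨M, hM, hIM⟩ := Ideal.exists_le_maximal _ hI
    have hxM : x ∈ M := by
      have hle : (⊥ : Ideal R).jacobson ≤ M := sInf_le ⟨bot_le, hM⟩
      exact hle hrad
    have h1M : (1 : R) - x ∈ M := hIM (Ideal.subset_span rfl)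
    have : (1 : R) ∈ M := by simpa using M.add_mem h1M hxM
    exact absurd (M.eq_top_iff_one.mpr this) hM.ne_top

end UnitLemma

section AlgebraSide

variable {A : Type*} [NonUnitalRing A] [Module ℂ A] [SMulCommClass ℂ A A] [IsScalarTower ℂ A A]
  [StarRing A] [StarModule ℂ A]

/-- Pairwise-orthogonal idempotents in `A`, multiplication table form. -/
lemma aux_hE {n : ℕ} {e : Fin n → A} (hproj : ∀ j, e j * e j = e j)
    (horth : ∀ j k, j ≠ k → e j * e k = 0) :
    ∀ j k, e j * e k = if j = k then e j else 0 := by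
  intro j k
  by_cases h : j = k
  · subst h; rw [if_pos rfl, hproj]
  · rw [if_neg h, horth j k h]

lemma aux_hE_inr {n : ℕ} {e : Fin n → A} (hproj : ∀ j, e j * e j = e j)
    (horth : ∀ j k, j ≠ k → e j * e k = 0) :
    ∀ j k, (↑(e j) : Unitization ℂ A) * ↑(e k) = if j = k then (↑(e j) : Unitization ℂ A) else 0 := by
  intro j k
  rw [← Unitization.inr_mul]
  by_cases h : j = k
  · subst h; rw [if_pos rfl, hproj]
  · rw [if_neg h, horth j k h, Unitization.inr_zero]

lemma aux_inr_sum {n : ℕ} (c : Fin n → ℂ) (f : Fin n → A) :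
    ((∑ j, c j • f j : A) : Unitization ℂ A) = ∑ j, c j • (↑(f j) : Unitization ℂ A) := by
  rw [show ((∑ j, c j • f j : A) : Unitization ℂ A)
      = (Unitization.inrNonUnitalAlgHom ℂ A) (∑ j, c j • f j) from rfl, map_sum]
  refine Finset.sum_congr rfl fun j _ => ?_
  rw [map_smul]; rfl

lemma aux_inr_ne_zero {x : A} (hx : x ≠ 0) : (↑x : Unitization ℂ A) ≠ 0 := fun h =>
  hx (Unitization.inr_injective (by rw [h, Unitization.inr_zero]))

/-- A selfadjoint element whose square is zero must be zero. -/
lemma aux_sq_zero (hdec : ∀ b : A, star b = b → b ≠ 0 → HasSpectralDecomposition b)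
    {b : A} (hb : star b = b) (hbb : b * b = 0) : b = 0 := by
  by_contra hb0
  obtain ⟨n, lam, e, hinj, hlam, he0, hproj, horth, hsum⟩ := hdec b hb hb0
  have hn : 0 < n := by
    rcases Nat.eq_zero_or_pos n with h | h
    · exfalso; apply hb0; rw [hsum]; subst h; simp
    · exact h
  set j : Fin n := ⟨0, hn⟩
  have hE := aux_hE (fun i => (hproj i).2) horth
  have hej : e j * b = (lam j : ℂ) • e j := by
    rw [hsum]; exact aux_mul_sum_left hE j _
  have hzero : ((lam j : ℂ) * (lam j : ℂ)) • e j = 0 := by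
    have : (e j * b) * b = 0 := by rw [mul_assoc, hbb, mul_zero]
    rw [hej, smul_mul_assoc, hej, smul_smul] at this
    exact this
  have hcne : ((lam j : ℂ) * (lam j : ℂ)) ≠ 0 :=
    mul_ne_zero (Complex.ofReal_ne_zero.mpr (hlam j)) (Complex.ofReal_ne_zero.mpr (hlam j))
  exact he0 j (by
    calc e j = ((lam j : ℂ) * (lam j : ℂ))⁻¹ • (((lam j : ℂ) * (lam j : ℂ)) • e j) :=
          (inv_smul_smul₀ hcne _).symm
    _ = 0 := by rw [hzero, smul_zero])

/-- For selfadjoint `k` and `r > 0`, `r•1 + k²` is invertible in the unitization. -/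
lemma aux_pos_unit (hdec : ∀ b : A, star b = b → b ≠ 0 → HasSpectralDecomposition b)
    {k : A} (hk : star k = k) {r : ℝ} (hr : 0 < r) :
    IsUnit ((r : ℂ) • (1 : Unitization ℂ A) + ↑(k * k)) := by
  by_cases hk0 : k = 0
  · subst hk0
    rw [mul_zero, Unitization.inr_zero, add_zero, ← Algebra.algebraMap_eq_smul_one]
    exact (isUnit_iff_ne_zero.mpr (Complex.ofReal_ne_zero.mpr hr.ne')).map
      (algebraMap ℂ (Unitization ℂ A))
  · obtain ⟨n, lam, e, hinj, hlam, he0, hproj, horth, hsum⟩ := hdec k hk hk0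
    have hE := aux_hE (A := A) (fun i => (hproj i).2) horth
    have hEU := aux_hE_inr (fun i => (hproj i).2) horth
    have hkk : (↑(k * k) : Unitization ℂ A)
        = ∑ i, ((lam i : ℂ) * (lam i : ℂ)) • (↑(e i) : Unitization ℂ A) := by
      rw [hsum, aux_ortho_expand hE, aux_inr_sum]
    rw [hkk]
    refine aux_isUnit hEU _ _ (Complex.ofReal_ne_zero.mpr hr.ne') fun i => ?_
    have : ((r : ℂ) + (lam i : ℂ) * (lam i : ℂ)) = ((r + lam i * lam i : ℝ) : ℂ) := by push_cast; ring
    rw [this]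
    exact Complex.ofReal_ne_zero.mpr (ne_of_gt (by nlinarith [mul_self_nonneg (lam i)]))

/-- The involution is proper. -/
lemma aux_proper (hdec : ∀ b : A, star b = b → b ≠ 0 → HasSpectralDecomposition b)
    (a : A) (ha : star a * a = 0) : a = 0 := by
  have has : a * star a = 0 := by
    refine aux_sq_zero hdec (by simp [star_mul, star_star]) ?_
    rw [mul_assoc, ← mul_assoc (star a), ha, zero_mul, mul_zero]
  set h := a + star a with hh_def
  set k := Complex.I • (a - star a) with hk_def
  have hh : star h = h := by rw [hh_def, star_add, star_star, add_comm]
  have hk : star k = k := by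
    rw [hk_def, star_smul, star_sub, star_star, Complex.star_def, Complex.conj_I, neg_smul,
      ← smul_neg, neg_sub]
  have hhh : h * h = a * a + star a * star a := by
    calc h * h = a * a + a * star a + (star a * a + star a * star a) := by
          rw [hh_def, add_mul, mul_add, mul_add]
    _ = a * a + star a * star a := by rw [ha, has, add_zero, zero_add]
  have hkk : k * k = -(h * h) := by
    rw [hk_def, smul_mul_smul_comm, Complex.I_mul_I, hhh]
    have hsub : (a - star a) * (a - star a) = a * a + star a * star a := by
      calc (a - star a) * (a - star a)
          = a * a - a * star a - (star a * a - star a * star a) := by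
            rw [sub_mul, mul_sub, mul_sub]
      _ = a * a + star a * star a := by
            rw [ha, has, sub_zero, zero_sub, sub_neg_eq_add]
    rw [hsub, neg_one_smul]
  have hh0 : h = 0 := by
    by_contra h0
    obtain ⟨n, lam, e, hinj, hlam, he0, hproj, horth, hsum⟩ := hdec h hh h0
    have hn : 0 < n := by
      rcases Nat.eq_zero_or_pos n with hz | hz
      · exfalso; apply h0; rw [hsum]; subst hz; simp
      · exact hz
    set j : Fin n := ⟨0, hn⟩
    have hE := aux_hE (A := A) (fun i => (hproj i).2) horth
    have hEU := aux_hE_inr (fun i => (hproj i).2) horth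
    have hhhU : (↑(h * h) : Unitization ℂ A)
        = ∑ i, ((lam i : ℂ) * (lam i : ℂ)) • (↑(e i) : Unitization ℂ A) := by
      rw [hsum, aux_ortho_expand hE, aux_inr_sum]
    set r : ℝ := lam j * lam j with hr_def
    have hr : 0 < r := mul_self_pos.mpr (hlam j)
    have hu : IsUnit ((r : ℂ) • (1 : Unitization ℂ A) + ↑(k * k)) := aux_pos_unit hdec hk hr
    have hann : (↑(e j) : Unitization ℂ A) * ((r : ℂ) • (1 : Unitization ℂ A) + ↑(k * k)) = 0 := by
      have h1 : (↑(k * k) : Unitization ℂ A) = -↑(h * h) := by rw [hkk, Unitization.inr_neg]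
      rw [h1, hhhU, mul_add, mul_neg, mul_smul_comm, mul_one, aux_mul_sum_left hEU j]
      have : (r : ℂ) = (lam j : ℂ) * (lam j : ℂ) := by rw [hr_def]; push_cast; ring
      rw [this, add_neg_cancel]
    exact absurd hu (aux_not_isUnit_of_ann (aux_inr_ne_zero (he0 j)) hann)
  have hk0 : k = 0 := by
    refine aux_sq_zero hdec hk ?_
    rw [hkk, hh0, mul_zero, neg_zero]
  have h2a : (2 : ℂ) • a = h - Complex.I • k := by
    rw [hh_def, hk_def, smul_smul, Complex.I_mul_I, neg_one_smul, sub_neg_eq_add, two_smul]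
    abel
  have hza : (2 : ℂ) • a = 0 := by rw [h2a, hh0, hk0, smul_zero, sub_zero]
  calc a = (2 : ℂ)⁻¹ • ((2 : ℂ) • a) := by
        rw [smul_smul, inv_mul_cancel₀ (two_ne_zero), one_smul]
  _ = 0 := by rw [hza, smul_zero]

end AlgebraSide

/-- If in an algebraic complex `*`-algebra every nonzero selfadjoint
element is a finite linear combination of nonzero pairwise orthogonal projections with
distinct nonzero real coefficients, then the algebra is hermitian and semisimple. -/
theorem hermitian_and_semisimple_of_spectralDecomposition (A : Type*) [NonUnitalRing A]
    [Module ℂ A] [SMulCommClass ℂ A A] [IsScalarTower ℂ A A] [StarRing A] [StarModule ℂ A]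
    (halg : IsAlgebraicAlgebra A)
    (hdec : ∀ b : A, star b = b → b ≠ 0 → HasSpectralDecomposition b) :
    IsHermitianStarAlgebra A ∧ IsSemisimpleAlgebra A := by
  constructor
  · -- hermitian
    intro b hb z hz
    by_cases hb0 : b = 0
    · subst hb0
      rw [spectrum.mem_iff, Unitization.inr_zero, sub_zero] at hz
      by_contra him
      exact hz ((isUnit_iff_ne_zero.mpr fun h => him (by rw [h]; rfl)).map
        (algebraMap ℂ (Unitization ℂ A)))
    · obtain ⟨n, lam, e, hinj, hlam, he0, hproj, horth, hsum⟩ := hdec b hb hb0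
      have hEU := aux_hE_inr (fun i => (hproj i).2) horth
      have hbU : (↑b : Unitization ℂ A) = ∑ j, (lam j : ℂ) • (↑(e j) : Unitization ℂ A) := by
        rw [hsum, aux_inr_sum]
      rw [spectrum.mem_iff, hbU] at hz
      by_contra him
      apply hz
      have hneg : -(∑ j, (lam j : ℂ) • (↑(e j) : Unitization ℂ A))
          = ∑ j, (-(lam j : ℂ)) • (↑(e j) : Unitization ℂ A) := by
        rw [← Finset.sum_neg_distrib]
        exact Finset.sum_congr rfl fun j _ => (neg_smul _ _).symm
      rw [Algebra.algebraMap_eq_smul_one, sub_eq_add_neg, hneg]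
      refine aux_isUnit hEU _ _ (fun h => him (by rw [h]; rfl)) fun j hc => him ?_
      have hz' : z = (lam j : ℂ) := sub_eq_zero.mp (by rw [sub_eq_add_neg]; exact hc)
      rw [hz', Complex.ofReal_im]
  · -- semisimple
    intro a ha
    have hbmem : (↑(star a * a) : Unitization ℂ A) ∈ (⊥ : Ideal (Unitization ℂ A)).jacobson := by
      rw [Unitization.inr_mul]
      exact Ideal.mul_mem_left _ _ ha
    have hbsa : star (star a * a) = star a * a := by rw [star_mul, star_star]
    have hb0 : star a * a = 0 := by
      by_contra hbne
      obtain ⟨n, lam, e, hinj, hlam, he0, hproj, horth, hsum⟩ := hdec _ hbsa hbne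
      have hn : 0 < n := by
        rcases Nat.eq_zero_or_pos n with hzn | hzn
        · exfalso; apply hbne; rw [hsum]; subst hzn; simp
        · exact hzn
      set j : Fin n := ⟨0, hn⟩
      have hE := aux_hE (A := A) (fun i => (hproj i).2) horth
      have hej : e j * (star a * a) = (lam j : ℂ) • e j := by
        rw [hsum]
        exact aux_mul_sum_left hE j _
      have hlamne : (lam j : ℂ) ≠ 0 := Complex.ofReal_ne_zero.mpr (hlam j)
      have heq : ((lam j : ℂ)⁻¹ • e j) * (star a * a) = e j := by
        rw [smul_mul_assoc, hej, smul_smul, inv_mul_cancel₀ hlamne, one_smul]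
      have hrad : (↑(e j) : Unitization ℂ A) ∈ (⊥ : Ideal (Unitization ℂ A)).jacobson := by
        have hmem := Ideal.mul_mem_left _ ((↑(((lam j : ℂ)⁻¹ • e j)) : Unitization ℂ A)) hbmem
        rw [← Unitization.inr_mul, heq] at hmem
        exact hmem
      have hzero : (↑(e j) : Unitization ℂ A) = 0 :=
        aux_idem_jacobson (by rw [← Unitization.inr_mul, (hproj j).2]) hrad
      exact aux_inr_ne_zero (he0 j) hzero
    exact aux_proper hdec a hb0
end

section
/- Let A be a complex *-algebra that is algebraic and whose involution is proper. Then A is a weakly Rickart *-ring: for every a ∈ A there exists a projection e ∈ A such that ae = a and such that for every y ∈ A, ay = 0 implies ey = 0. -/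
open Polynomial

section Aux

set_option linter.unusedSectionVars false

variable {A : Type*} [NonUnitalRing A] [Module ℂ A]
    [SMulCommClass ℂ A A] [IsScalarTower ℂ A A] [StarRing A] [StarModule ℂ A]

lemma aux_star_aeval (H : Unitization ℂ A) (hH : star H = H) (r : ℂ[X]) :
    star (aeval H r) = aeval H (r.map (starRingEnd ℂ)) := by
  induction r using Polynomial.induction_on' with
  | add p q hp hq => rw [map_add, star_add, hp, hq, Polynomial.map_add, map_add]
  | monomial n c =>
      rw [Polynomial.map_monomial, aeval_monomial, aeval_monomial, star_mul, star_pow, hH,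
        starRingEnd_apply, ← algebraMap_star_comm]
      exact (Algebra.commutes _ _).symm

lemma aux_comm (H : Unitization ℂ A) (r s : ℂ[X]) :
    aeval H r * aeval H s = aeval H s * aeval H r := by
  rw [← map_mul, ← map_mul, mul_comm]

lemma aux_commX (H : Unitization ℂ A) (r : ℂ[X]) :
    aeval H r * H = H * aeval H r := by
  have h1 := aux_comm H r X
  rwa [aeval_X] at h1

lemma aux_fst (H : Unitization ℂ A) (hH : (Unitization.fstHom ℂ A) H = 0) (r : ℂ[X]) :
    (aeval H r).fst = r.coeff 0 := by
  have h1 : (Unitization.fstHom ℂ A) (aeval H r) = aeval ((Unitization.fstHom ℂ A) H) r :=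
    (Polynomial.aeval_algHom_apply (Unitization.fstHom ℂ A) H r).symm
  rw [hH] at h1
  have h2 : aeval (0:ℂ) r = r.coeff 0 := by
    rw [show (aeval (0:ℂ) r) = eval 0 r from congrFun (Polynomial.coe_aeval_eq_eval 0) r,
      ← Polynomial.coeff_zero_eq_eval_zero]
  rw [← h2, ← h1]; rfl

lemma aux_toA (x : Unitization ℂ A) (hx : x.fst = 0) : ((x.snd : A) : Unitization ℂ A) = x := by
  have := Unitization.inl_fst_add_inr_snd_eq x
  rw [hx] at this
  simpa using this

/-- Auxiliary: `npow1 h k = h ^ (k+1)` in a possibly non-unital ring. -/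
def npow1 {A : Type*} [Mul A] (h : A) : ℕ → A
  | 0 => h
  | (k+1) => npow1 h k * h

end Aux

/-- An algebraic complex `*`-algebra with proper involution is a weakly
Rickart `*`-ring: every `a` admits a projection `e` with `a * e = a` and `a * y = 0 →
e * y = 0`. -/
theorem weaklyRickart_of_properInvolution (A : Type*) [NonUnitalRing A] [Module ℂ A]
    [SMulCommClass ℂ A A] [IsScalarTower ℂ A A] [StarRing A] [StarModule ℂ A]
    (halg : IsAlgebraicAlgebra A) (hproper : HasProperInvolution A) :
    ∀ a : A, ∃ e : A, star e = e ∧ e * e = e ∧ a * e = a ∧ ∀ y : A, a * y = 0 → e * y = 0 := by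
  classical
  intro a
  set h : A := star a * a with hh
  set H : Unitization ℂ A := (h : Unitization ℂ A) with hHdef
  have hHsa : star H = H := by
    rw [hHdef, ← Unitization.inr_star, hh, star_mul, star_star]
  have hfstH : (Unitization.fstHom ℂ A) H = 0 := by
    simp [hHdef]
  -- properness transferred to the unitization
  have properB : ∀ x : Unitization ℂ A, x.fst = 0 → star x * x = 0 → x = 0 := by
    intro x hx h0
    rw [← aux_toA x hx] at h0 ⊢
    rw [← Unitization.inr_star, ← Unitization.inr_mul] at h0
    have h1 : star x.snd * x.snd = 0 := by
      apply Unitization.inr_injective (R := ℂ)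
      rw [h0, Unitization.inr_zero]
    rw [hproper _ h1, Unitization.inr_zero]
  -- inr of powers
  have inr_pow : ∀ m : ℕ, ((npow1 h m : A) : Unitization ℂ A) = H ^ (m+1) := by
    intro m
    induction m with
    | zero => rw [npow1, pow_one, hHdef]
    | succ k ih => rw [npow1, Unitization.inr_mul, ih, ← hHdef, ← pow_succ]
  -- existence of a nonzero annihilating polynomial with zero constant term
  obtain ⟨S, hmem, hfin⟩ := halg h
  have hpowmem : ∀ k : ℕ, npow1 h k ∈ S := by
    intro k
    induction k with
    | zero => simpa [npow1] using hmem
    | succ m ih => rw [npow1]; exact mul_mem ih hmem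
  set n := Module.finrank ℂ S with hn
  have hdep : ¬ LinearIndependent ℂ (fun k : Fin (n+1) => (⟨npow1 h (k:ℕ), hpowmem k⟩ : S)) := by
    intro hli
    have hcard := hli.fintype_card_le_finrank
    rw [Fintype.card_fin] at hcard
    omega
  obtain ⟨c, hcsum, i0, hi0⟩ := Fintype.not_linearIndependent_iff.mp hdep
  have hsumA : ∑ k : Fin (n+1), c k • npow1 h (k:ℕ) = 0 := by
    have := congrArg (Subtype.val) hcsum
    simpa using this
  set p : ℂ[X] := ∑ k : Fin (n+1), C (c k) * X^((k:ℕ)+1) with hp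
  have hpcoeff : p.coeff ((i0:ℕ)+1) = c i0 := by
    rw [hp, finset_sum_coeff, Finset.sum_eq_single i0]
    · simp [coeff_C_mul, coeff_X_pow]
    · intro k _ hk
      have hne : ((i0:ℕ)+1 ≠ (k:ℕ)+1) := by
        simpa [Fin.val_inj] using (Ne.symm hk)
      simp [coeff_C_mul, coeff_X_pow, hne, Fin.val_inj, hk.symm]
    · intro hmem'
      exact absurd (Finset.mem_univ i0) hmem'
  have hpne : p ≠ 0 := by
    intro h0
    rw [h0, coeff_zero] at hpcoeff
    exact hi0 hpcoeff.symm
  have hp0 : p.coeff 0 = 0 := by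
    rw [hp, finset_sum_coeff]
    refine Finset.sum_eq_zero fun k _ => ?_
    simp [coeff_C_mul, coeff_X_pow]
  have hpH : aeval H p = 0 := by
    rw [hp, map_sum]
    have e1 : ∀ k : Fin (n+1), aeval H (C (c k) * X^((k:ℕ)+1)) = c k • H ^ ((k:ℕ)+1) := by
      intro k; rw [map_mul, aeval_C, map_pow, aeval_X, ← Algebra.smul_def]
    have e2 : ∀ k : Fin (n+1),
        c k • H ^ ((k:ℕ)+1) = (((c k • npow1 h (k:ℕ) : A)) : Unitization ℂ A) := by
      intro k; rw [Unitization.inr_smul, inr_pow]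
    have e3 := map_sum (Unitization.inrNonUnitalAlgHom ℂ A)
        (fun k : Fin (n+1) => c k • npow1 h (k:ℕ)) Finset.univ
    simp only [Unitization.inrNonUnitalAlgHom_toFun] at e3
    rw [Finset.sum_congr rfl fun k _ => e1 k, Finset.sum_congr rfl fun k _ => e2 k,
      ← e3, hsumA]
    exact Unitization.inr_zero ℂ
  -- minimal annihilating polynomial
  have hex : ∃ m : ℕ, ∃ q : ℂ[X], q ≠ 0 ∧ q.coeff 0 = 0 ∧ aeval H q = 0 ∧ q.natDegree = m :=
    ⟨p.natDegree, p, hpne, hp0, hpH, rfl⟩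
  obtain ⟨q, hqne, hq0, hqH, hqdeg⟩ := Nat.find_spec hex
  have hmin : ∀ r : ℂ[X], r ≠ 0 → r.coeff 0 = 0 → aeval H r = 0 → Nat.find hex ≤ r.natDegree :=
    fun r h1 h2 h3 => Nat.find_min' hex ⟨r, h1, h2, h3, rfl⟩
  set g := q.divX with hgdef
  have hq_eq : q = X * g := by
    have h1 := X_mul_divX_add q
    rw [hq0] at h1
    simpa using h1.symm
  -- the constant term of g is nonzero
  have hc : g.coeff 0 ≠ 0 := by
    intro hc0
    set w := g.divX with hwdef
    have hg_eq : g = X * w := by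
      have h1 := X_mul_divX_add g
      rw [hc0] at h1
      simpa using h1.symm
    have hwne : w ≠ 0 := by
      intro h0
      apply hqne
      rw [hq_eq, hg_eq, h0, mul_zero, mul_zero]
    have hrne : (X * w : ℂ[X]) ≠ 0 := mul_ne_zero X_ne_zero hwne
    have hr0 : (X * w : ℂ[X]).coeff 0 = 0 := by
      rw [mul_coeff_zero, coeff_X_zero, zero_mul]
    have hstar : star (aeval H (X * w)) * aeval H (X * w) = 0 := by
      rw [aux_star_aeval H hHsa, ← map_mul]
      have hfac : (X * w : ℂ[X]).map (starRingEnd ℂ) * (X * w) = q * (w.map (starRingEnd ℂ)) := by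
        rw [hq_eq, hg_eq, Polynomial.map_mul, map_X]
        ring
      rw [hfac, map_mul, hqH, zero_mul]
    have hrz : aeval H (X * w) = 0 :=
      properB _ (by rw [aux_fst H hfstH]; exact hr0) hstar
    have hle := hmin _ hrne hr0 hrz
    have hdq : q.natDegree = w.natDegree + 2 := by
      rw [hq_eq, hg_eq, natDegree_mul X_ne_zero (mul_ne_zero X_ne_zero hwne),
        natDegree_mul X_ne_zero hwne, natDegree_X]
      ring
    have hdr : (X * w : ℂ[X]).natDegree = w.natDegree + 1 := by
      rw [natDegree_mul X_ne_zero hwne, natDegree_X]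
      ring
    omega
  -- construction of the projection
  set cc := g.coeff 0 with hccdef
  set w := g.divX with hwdef
  have hg_eq : g = X * w + C cc := (X_mul_divX_add g).symm
  have hq2 : q = X^2 * w + C cc * X := by
    rw [hq_eq, hg_eq]; ring
  set W := aeval H w with hWdef
  set M := H * W with hMdef
  have hXaev : aeval H (X : ℂ[X]) = H := aeval_X H
  have hWH : W * H = H * W := by
    rw [hWdef]
    exact aux_commX H w
  have key : H * M = -(cc • H) := by
    have h1 : aeval H q = H * M + cc • H := by
      rw [hq2, map_add, map_mul, map_mul, map_pow, aeval_X, aeval_C, ← Algebra.smul_def,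
        pow_two, mul_assoc, ← hWdef, ← hMdef]
    have h2 : H * M + cc • H = 0 := by rw [← h1, hqH]
    exact add_eq_zero_iff_eq_neg.mp h2
  have hMH : M * H = H * M := by
    rw [hMdef, mul_assoc, hWH, ← mul_assoc]
  have hMaev : M = aeval H (X * w) := by
    rw [map_mul, aeval_X, ← hWdef, ← hMdef]
  have hMM : M * M = -(cc • M) := by
    have step : M * M = (H * M) * W := by
      rw [hMdef, mul_assoc, ← mul_assoc W H W, hWH, ← mul_assoc, ← mul_assoc]
    rw [step, key, neg_mul, smul_mul_assoc, ← hMdef]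
  set E₀ : Unitization ℂ A := (-(cc⁻¹)) • M with hE₀def
  have P2 : H * E₀ = H := by
    rw [hE₀def, mul_smul_comm, key, smul_neg, neg_smul, neg_neg, smul_smul,
      inv_mul_cancel₀ hc, one_smul]
  have P1 : E₀ * H = H := by
    rw [hE₀def, smul_mul_assoc, hMH, key, smul_neg, neg_smul, neg_neg, smul_smul,
      inv_mul_cancel₀ hc, one_smul]
  have P3 : E₀ * E₀ = E₀ := by
    rw [hE₀def, smul_mul_assoc, mul_smul_comm, hMM]
    match_scalars
    field_simp
  have hE₀aev : E₀ = aeval H (C (-(cc⁻¹)) * (X * w)) := by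
    rw [map_mul, aeval_C, ← hMaev, ← Algebra.smul_def, ← hE₀def]
  set E₁ := star E₀ with hE₁def
  have P1' : E₁ * H = H := by
    rw [hE₁def, ← hHsa, ← star_mul, P2, hHsa]
  have P2' : H * E₁ = H := by
    rw [hE₁def, ← hHsa, ← star_mul, P1, hHsa]
  have P3' : E₁ * E₁ = E₁ := by
    rw [hE₁def, ← star_mul, P3]
  have hE₁aev : E₁ = aeval H ((C (-(cc⁻¹)) * (X * w)).map (starRingEnd ℂ)) := by
    rw [hE₁def, hE₀aev, aux_star_aeval H hHsa]
  have hcommE : E₀ * E₁ = E₁ * E₀ := by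
    rw [hE₀aev, hE₁aev]
    exact aux_comm H _ _
  set Q : ℂ[X] := (C (-(cc⁻¹)) * (X * w)).map (starRingEnd ℂ) * (C (-(cc⁻¹)) * (X * w)) with hQdef
  set E := E₁ * E₀ with hEdef
  have hEaev : E = aeval H Q := by
    rw [hEdef, hE₁aev, hE₀aev, hQdef, ← map_mul]
  have hstarE : star E = E := by
    rw [hEdef, star_mul, hE₁def, star_star]
  have hmulE : E * E = E := by
    rw [hEdef, mul_assoc, ← mul_assoc E₀ E₁ E₀, hcommE, mul_assoc E₁ E₀ E₀, P3,
      ← mul_assoc, P3']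
  have HE : H * E = H := by
    rw [hEdef, ← mul_assoc, P2', P2]
  have EH : E * H = H := by
    rw [hEdef, mul_assoc, P1, P1']
  have hQ0 : Q.coeff 0 = 0 := by
    rw [hQdef, mul_coeff_zero]
    have h1 : (C (-(cc⁻¹)) * (X * w)).coeff 0 = 0 := by
      rw [mul_coeff_zero, mul_coeff_zero, coeff_X_zero]
      ring
    rw [coeff_map, h1, map_zero, zero_mul]
  have hfstE : E.fst = 0 := by
    rw [hEaev, aux_fst H hfstH]
    exact hQ0
  have hann : ∀ Y : Unitization ℂ A, H * Y = 0 → E * Y = 0 := by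
    intro Y hY
    have hQX : X * Q.divX = Q := by
      have h1 := X_mul_divX_add Q
      rw [hQ0] at h1
      simpa using h1
    have hEfac : E = aeval H Q.divX * H := by
      conv_lhs => rw [hEaev, ← hQX]
      rw [map_mul, aeval_X]
      exact (aux_commX H Q.divX).symm
    rw [hEfac, mul_assoc, hY, mul_zero]
  have hEA : ((E.snd : A) : Unitization ℂ A) = E := aux_toA E hfstE
  refine ⟨E.snd, ?_, ?_, ?_, ?_⟩
  · apply Unitization.inr_injective (R := ℂ)
    rw [Unitization.inr_star, hEA, hstarE]
  · apply Unitization.inr_injective (R := ℂ)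
    rw [Unitization.inr_mul, hEA, hmulE]
  · have hsa2 : star ((a : Unitization ℂ A)) * (a : Unitization ℂ A) = H := by
      rw [← Unitization.inr_star, ← Unitization.inr_mul, ← hh, ← hHdef]
    have t1 : star ((a : Unitization ℂ A)) * ((a : Unitization ℂ A) * E) = H := by
      rw [← mul_assoc, hsa2, HE]
    have t2 : E * (star ((a : Unitization ℂ A)) * (a : Unitization ℂ A)) = H := by
      rw [hsa2, EH]
    have t3 : E * (star ((a : Unitization ℂ A)) * ((a : Unitization ℂ A) * E)) = H := by
      rw [t1, EH]
    have hd : star (a - a * E.snd) * (a - a * E.snd) = 0 := by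
      apply Unitization.inr_injective (R := ℂ)
      rw [Unitization.inr_mul, Unitization.inr_star, Unitization.inr_sub, Unitization.inr_mul,
        hEA, Unitization.inr_zero]
      rw [star_sub, star_mul, hstarE]
      simp only [sub_mul, mul_sub, mul_assoc]
      rw [t3, t2, t1, hsa2]
      simp
    have := hproper _ hd
    exact (sub_eq_zero.mp this).symm
  · intro y hy
    have hHy : H * (y : Unitization ℂ A) = 0 := by
      rw [hHdef, ← Unitization.inr_mul]
      have h1 : h * y = 0 := by rw [hh, mul_assoc, hy, mul_zero]
      rw [h1, Unitization.inr_zero]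
    have hEy := hann _ hHy
    apply Unitization.inr_injective (R := ℂ)
    rw [Unitization.inr_mul, hEA, hEy, Unitization.inr_zero]
end

section
/- Let A be a complex *-algebra that is algebraic. Then the involution of A is proper if and only if A is hermitian and von Neumann regular. -/
section AuxProperInvolution

set_option linter.unusedSectionVars false

open Polynomial Unitization

variable {A : Type*} [NonUnitalRing A] [Module ℂ A] [SMulCommClass ℂ A A]
  [IsScalarTower ℂ A A] [StarRing A] [StarModule ℂ A]



lemma star_aeval' (x : Unitization ℂ A) (hx : star x = x) (p : ℂ[X]) :
    star (aeval x p) = aeval x (p.map (starRingEnd ℂ)) := by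
  induction p using Polynomial.induction_on' with
  | add p q hp hq => simp [hp, hq]
  | monomial n c =>
      rw [aeval_monomial, Polynomial.map_monomial, aeval_monomial, star_mul, star_pow, hx,
        ← algebraMap_star_comm]
      exact (Algebra.commutes _ _).symm

lemma fst_aeval' (a : A) (p : ℂ[X]) :
    (aeval (a : Unitization ℂ A) p).fst = p.coeff 0 := by
  show Unitization.fstHom ℂ A (aeval (a : Unitization ℂ A) p) = p.coeff 0
  rw [← Polynomial.aeval_algHom_apply (Unitization.fstHom ℂ A) (a : Unitization ℂ A) p]
  have : Unitization.fstHom ℂ A (a : Unitization ℂ A) = 0 := Unitization.fst_inr ℂ a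
  rw [this]
  simp [aeval_def, eval₂_at_zero]

lemma aeval_mem_inr (a : A) (p : ℂ[X]) (hp : p.coeff 0 = 0) :
    ∃ b : A, (b : Unitization ℂ A) = aeval (a : Unitization ℂ A) p := by
  refine ⟨(aeval (a : Unitization ℂ A) p).snd, ?_⟩
  have h1 := Unitization.inl_fst_add_inr_snd_eq (aeval (a : Unitization ℂ A) p)
  rw [fst_aeval', hp] at h1
  simpa using h1

private def npow' (a : A) : ℕ → A
  | 0 => a
  | k+1 => npow' a k * a

lemma isIntegral_inr' (halg : ∀ a : A, ∃ S : NonUnitalSubalgebra ℂ A, a ∈ S ∧ FiniteDimensional ℂ S)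
    (a : A) : IsIntegral ℂ (a : Unitization ℂ A) := by
  obtain ⟨S, haS, hfd⟩ := halg a
  -- powers of a inside S
  set b : ℕ → A := npow' a with hbdef
  have hbS : ∀ k, b k ∈ S := by
    intro k; induction k with
    | zero => exact haS
    | succ k ih => exact mul_mem ih haS
  have hbU : ∀ k, (↑(b k) : Unitization ℂ A) = (a : Unitization ℂ A) ^ (k + 1) := by
    intro k; induction k with
    | zero => simp [hbdef, npow']
    | succ k ih => rw [pow_succ, ← ih, hbdef]; exact Unitization.inr_mul ℂ _ _
  set n := Module.finrank ℂ S with hn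
  have hni : ¬ LinearIndependent ℂ (fun i : Fin (n + 1) => (⟨b i, hbS i⟩ : S)) := by
    intro hli
    have := hli.fintype_card_le_finrank
    simp [hn] at this
  obtain ⟨g, hg0, j, hgj⟩ := Fintype.not_linearIndependent_iff.mp hni
  have hrel : (∑ i : Fin (n + 1), g i • b i) = 0 := by
    have := congrArg (Subtype.val) hg0
    simpa using this
  -- build the polynomial
  refine isAlgebraic_iff_isIntegral.mp ⟨∑ i : Fin (n + 1), C (g i) * X ^ ((i : ℕ) + 1), ?_, ?_⟩
  · intro hp
    have := congrArg (fun q => Polynomial.coeff q ((j : ℕ) + 1)) hp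
    simp only [finset_sum_coeff, coeff_C_mul, coeff_X_pow, coeff_zero] at this
    rw [Finset.sum_eq_single j] at this
    · simp at this; exact hgj this
    · intro i _ hij
      have : (i : ℕ) + 1 ≠ (j : ℕ) + 1 := by
        simpa using fun h => hij (Fin.ext h)
      simp only [if_neg this.symm, mul_zero]
    · intro hj; exact absurd (Finset.mem_univ j) hj
  · rw [map_sum]
    have : ∀ i : Fin (n + 1), (aeval (a : Unitization ℂ A)) (C (g i) * X ^ ((i : ℕ) + 1))
        = g i • (↑(b i) : Unitization ℂ A) := by
      intro i
      rw [map_mul, aeval_C, map_pow, aeval_X, hbU, Algebra.smul_def]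
    simp only [this]
    calc (∑ i : Fin (n+1), g i • (↑(b i) : Unitization ℂ A))
        = ∑ i : Fin (n+1), (↑(g i • b i) : Unitization ℂ A) := by
          refine Finset.sum_congr rfl fun i _ => ?_
          exact (Unitization.inr_smul ℂ _ _).symm
      _ = ((∑ i : Fin (n+1), g i • b i : A) : Unitization ℂ A) := by
          exact (map_sum (Unitization.inrNonUnitalAlgHom ℂ A) (fun i => g i • b i)
            Finset.univ).symm
      _ = 0 := by rw [hrel]; exact Unitization.inr_zero ℂ

lemma coeff_zero_minpoly (h : A) : (minpoly ℂ (h : Unitization ℂ A)).coeff 0 = 0 := by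
  rw [← fst_aeval' h (minpoly ℂ (h : Unitization ℂ A)), minpoly.aeval]
  exact Unitization.fst_zero

lemma star_inr_self {h : A} (hsa : star h = h) :
    star (h : Unitization ℂ A) = (h : Unitization ℂ A) := by
  rw [← Unitization.inr_star, hsa]

lemma not_X_sq_dvd (proper : ∀ a : A, star a * a = 0 → a = 0) (h : A) (hsa : star h = h)
    (hint : IsIntegral ℂ (h : Unitization ℂ A)) :
    ¬ (X ^ 2 ∣ minpoly ℂ (h : Unitization ℂ A)) := by
  rintro ⟨ρ, hρ⟩
  set μ := minpoly ℂ (h : Unitization ℂ A) with hμ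
  have hμ0 : μ ≠ 0 := minpoly.ne_zero hint
  have hρ0 : ρ ≠ 0 := by rintro rfl; rw [mul_zero] at hρ; exact hμ0 hρ
  have hco : (X * ρ).coeff 0 = 0 := by simp [mul_coeff_zero]
  obtain ⟨s, hs⟩ := aeval_mem_inr h (X * ρ) hco
  have h1 : star s * s = 0 := by
    apply Unitization.inr_injective (R := ℂ)
    rw [Unitization.inr_mul, Unitization.inr_zero]
    show ((star s : A) : Unitization ℂ A) * ((s : A) : Unitization ℂ A) = 0
    rw [Unitization.inr_star, hs, star_aeval' _ (star_inr_self hsa), ← map_mul]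
    have : (X * ρ).map (starRingEnd ℂ) * (X * ρ) = μ * ρ.map (starRingEnd ℂ) := by
      rw [hρ, Polynomial.map_mul, map_X]; ring
    rw [this, map_mul, minpoly.aeval, zero_mul]
  have hs0 := proper s h1
  rw [hs0] at hs
  have h2 : aeval (h : Unitization ℂ A) (X * ρ) = 0 := by
    rw [← hs, Unitization.inr_zero]
  have hdvd : μ ∣ X * ρ := minpoly.dvd ℂ _ h2
  have hXρ : X * ρ ≠ 0 := mul_ne_zero X_ne_zero hρ0
  have hd1 : μ.natDegree ≤ (X * ρ).natDegree := natDegree_le_of_dvd hdvd hXρ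
  rw [hρ, natDegree_mul (pow_ne_zero 2 X_ne_zero) hρ0, natDegree_mul X_ne_zero hρ0,
    natDegree_X_pow, natDegree_X] at hd1
  omega

lemma minpoly_conj_eq (h : A) (hsa : star h = h) (hint : IsIntegral ℂ (h : Unitization ℂ A)) :
    (minpoly ℂ (h : Unitization ℂ A)).map (starRingEnd ℂ) = minpoly ℂ (h : Unitization ℂ A) := by
  set μ := minpoly ℂ (h : Unitization ℂ A) with hμ
  have hmonic : μ.Monic := minpoly.monic hint
  have hzero : aeval (h : Unitization ℂ A) (μ.map (starRingEnd ℂ)) = 0 := by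
    rw [← star_aeval' _ (star_inr_self hsa), minpoly.aeval, star_zero]
  have hdvd : μ ∣ μ.map (starRingEnd ℂ) := minpoly.dvd ℂ _ hzero
  have hinv : ∀ q : ℂ[X], (q.map (starRingEnd ℂ)).map (starRingEnd ℂ) = q := by
    intro q
    rw [Polynomial.map_map]
    have : (starRingEnd ℂ).comp (starRingEnd ℂ) = RingHom.id ℂ := by
      ext z; exact Complex.conj_conj z
    rw [this, Polynomial.map_id]
  have hdvd2 : μ.map (starRingEnd ℂ) ∣ μ := by
    have := Polynomial.map_dvd (starRingEnd ℂ) hdvd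
    rwa [hinv] at this
  exact Polynomial.eq_of_monic_of_associated (hmonic.map _) hmonic
    (associated_of_dvd_dvd hdvd2 hdvd)

lemma im_eq_zero_of_root (proper : ∀ a : A, star a * a = 0 → a = 0) (h : A) (hsa : star h = h)
    (hint : IsIntegral ℂ (h : Unitization ℂ A)) {z : ℂ}
    (hz : (minpoly ℂ (h : Unitization ℂ A)).IsRoot z) : z.im = 0 := by
  by_contra him
  set μ := minpoly ℂ (h : Unitization ℂ A) with hμ
  have hμ0 : μ ≠ 0 := minpoly.ne_zero hint
  have hzne : z ≠ 0 := fun h0 => him (h0 ▸ rfl)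
  have hconj : μ.map (starRingEnd ℂ) = μ := minpoly_conj_eq h hsa hint
  set m := rootMultiplicity z μ with hm
  have hmpos : 0 < m := (rootMultiplicity_pos hμ0).mpr hz
  set ν := μ /ₘ (X - C z) ^ m with hν
  have hfac : (X - C z) ^ m * ν = μ := pow_mul_divByMonic_rootMultiplicity_eq μ z
  have hνz : ν.eval z ≠ 0 := eval_divByMonic_pow_rootMultiplicity_ne_zero z hμ0
  have hnd : ¬ (X - C z) ∣ ν := fun hd => hνz (dvd_iff_isRoot.mp hd)
  have hcop : IsCoprime ((X - C z) ^ m) ν :=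
    ((irreducible_X_sub_C z).coprime_iff_not_dvd.mpr hnd).pow_left
  obtain ⟨u, v, huv⟩ := hcop
  set f := v * ν with hf
  have hf1 : f = 1 - u * (X - C z) ^ m := by linear_combination huv
  -- X divides ν
  have hXμ : X ∣ μ := X_dvd_iff.mpr (coeff_zero_minpoly h)
  have hXν : X ∣ ν := by
    rw [← hfac] at hXμ
    rcases (Polynomial.prime_X (R := ℂ)).2.2 _ _ hXμ with hd | hd
    · exfalso
      have := Polynomial.prime_X.dvd_of_dvd_pow hd
      rw [X_dvd_iff] at this
      simp only [coeff_sub, coeff_X_zero, coeff_C_zero, zero_sub, neg_eq_zero] at this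
      exact hzne this
    · exact hd
  have hfc : f.coeff 0 = 0 := X_dvd_iff.mp (Dvd.dvd.mul_left hXν v)
  obtain ⟨e, he⟩ := aeval_mem_inr h f hfc
  -- e ≠ 0
  have hene : aeval (h : Unitization ℂ A) f ≠ 0 := by
    intro h0
    have hdvd : μ ∣ f := minpoly.dvd ℂ _ h0
    have hXz : (X - C z) ∣ f :=
      dvd_trans (dvd_trans (dvd_pow_self _ hmpos.ne') ⟨ν, hfac.symm⟩) hdvd
    have := dvd_iff_isRoot.mp hXz
    rw [hf1] at this
    simp [IsRoot, eval_sub, eval_mul, eval_pow, sub_self, zero_pow hmpos.ne'] at this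
  -- star e * e = 0
  have hkey : μ ∣ f.map (starRingEnd ℂ) * f := by
    conv_lhs => rw [← hfac]
    apply mul_dvd_mul
    · have hμ2 : (X - C (starRingEnd ℂ z)) ^ m * ν.map (starRingEnd ℂ) = μ := by
        conv_rhs => rw [← hconj, ← hfac]
        rw [Polynomial.map_mul, Polynomial.map_pow, Polynomial.map_sub, map_X, map_C]
      have hcop2 : IsCoprime ((X - C z) ^ m) ((X - C (starRingEnd ℂ z)) ^ m) := by
        apply IsCoprime.pow
        apply isCoprime_X_sub_C_of_isUnit_sub
        rw [isUnit_iff_ne_zero, sub_ne_zero]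
        intro hc
        rw [← Complex.conj_eq_iff_im] at him
        exact him hc.symm
      have hd : (X - C z) ^ m ∣ ν.map (starRingEnd ℂ) := by
        apply hcop2.dvd_of_dvd_mul_left
        rw [hμ2]
        exact ⟨ν, hfac.symm⟩
      rw [hf, Polynomial.map_mul]
      exact hd.mul_left _
    · exact dvd_mul_left ν v
  obtain ⟨w, hw⟩ := hkey
  have h2 : star e * e = 0 := by
    apply Unitization.inr_injective (R := ℂ)
    rw [Unitization.inr_mul, Unitization.inr_zero, Unitization.inr_star, he,
      star_aeval' _ (star_inr_self hsa), ← map_mul, hw, map_mul, minpoly.aeval, zero_mul]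
  have := proper e h2
  rw [this] at he
  exact hene (by rw [← he, Unitization.inr_zero])

lemma hermitian_of_proper (proper : ∀ a : A, star a * a = 0 → a = 0)
    (hint : ∀ a : A, IsIntegral ℂ (a : Unitization ℂ A)) (h : A) (hsa : star h = h)
    {z : ℂ} (hzs : z ∈ spectrum ℂ (h : Unitization ℂ A)) : z.im = 0 := by
  apply im_eq_zero_of_root proper h hsa (hint h)
  have h1 := spectrum.subset_polynomial_aeval (h : Unitization ℂ A)
    (minpoly ℂ (h : Unitization ℂ A)) ⟨z, hzs, rfl⟩
  rw [minpoly.aeval, spectrum.zero_eq] at h1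
  exact h1

lemma trick_assoc (proper : ∀ a : A, star a * a = 0 → a = 0) (a x h : A)
    (hh : h = star a * a) (hxh : h * x * h = h) : a * (x * star a) * a = a := by
  have hsa : star h = h := by rw [hh, star_mul, star_star]
  have hb1 : star a * (a * (x * h)) = h := by
    rw [← mul_assoc, ← mul_assoc, ← hh, mul_assoc, ← mul_assoc, hxh]
  have hb2' : star (a * (x * h)) * a = h := by
    have := congrArg star hb1
    rwa [star_mul, star_star, hsa] at this
  have hb3 : star (a * (x * h)) * (a * (x * h)) = h := by
    rw [← mul_assoc, hb2', ← mul_assoc, hxh]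
  have hd : star (a - a * (x * h)) * (a - a * (x * h)) = 0 := by
    rw [star_sub, sub_mul, mul_sub, mul_sub, ← hh, hb1, hb2', hb3]
    simp
  have hab : a = a * (x * h) := by
    have := proper _ hd; rwa [sub_eq_zero] at this
  calc a * (x * star a) * a = a * (x * (star a * a)) := by rw [mul_assoc, mul_assoc]
    _ = a * (x * h) := by rw [← hh]
    _ = a := hab.symm

lemma regular_of_proper (proper : ∀ a : A, star a * a = 0 → a = 0)
    (hint : ∀ a : A, IsIntegral ℂ (a : Unitization ℂ A)) (a : A) :
    ∃ x : A, a * x * a = a := by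
  obtain ⟨h, hh⟩ : ∃ h : A, h = star a * a := ⟨_, rfl⟩
  have hsa : star h = h := by rw [hh, star_mul, star_star]
  obtain ⟨μ, hμ⟩ : ∃ μ : ℂ[X], μ = minpoly ℂ (h : Unitization ℂ A) := ⟨_, rfl⟩
  have hμ0 : μ ≠ 0 := hμ ▸ minpoly.ne_zero (hint h)
  have hXμ : X ∣ μ := hμ ▸ X_dvd_iff.mpr (coeff_zero_minpoly h)
  obtain ⟨ρ, hρ⟩ := hXμ
  have hρc : ρ.coeff 0 ≠ 0 := by
    intro hzero
    apply not_X_sq_dvd proper h hsa (hint h)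
    obtain ⟨ρ₂, h2⟩ := X_dvd_iff.mpr hzero
    exact ⟨ρ₂, by rw [← hμ, hρ, h2]; ring⟩
  obtain ⟨c, hc⟩ : ∃ c : ℂ, c = ρ.coeff 0 := ⟨_, rfl⟩
  have hρc' : c ≠ 0 := hc ▸ hρc
  obtain ⟨g₀, hg₀⟩ : ∃ q : ℂ[X], q = -(C c⁻¹) * divX ρ := ⟨_, rfl⟩
  have hb : X * g₀ - 1 = -(C c⁻¹) * ρ := by
    have hXd := X_mul_divX_add ρ
    have hcc : C c⁻¹ * C (ρ.coeff 0) = 1 := by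
      rw [← hc, ← C_mul, inv_mul_cancel₀ hρc', C_1]
    calc X * g₀ - 1 = -(C c⁻¹) * (X * divX ρ + C (ρ.coeff 0)) + (C c⁻¹ * C (ρ.coeff 0) - 1) := by
          rw [hg₀]; ring
      _ = -(C c⁻¹) * ρ := by rw [hXd, hcc]; ring
  obtain ⟨g, hg⟩ : ∃ q : ℂ[X], q = g₀ - C (g₀.coeff 0 / c) * ρ := ⟨_, rfl⟩
  have hgc : g.coeff 0 = 0 := by
    rw [hg, coeff_sub, mul_coeff_zero, coeff_C_zero, hc, div_mul_cancel₀ _ hρc, sub_self]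
  have hρdvd : ρ ∣ X * g - 1 := by
    have hexp : X * g - 1 = (X * g₀ - 1) - X * C (g₀.coeff 0 / c) * ρ := by rw [hg]; ring
    rw [hexp, hb]
    exact dvd_sub (Dvd.intro_left _ rfl) (Dvd.intro_left _ rfl)
  have hμdvd : μ ∣ X * g * X - X := by
    obtain ⟨w, hw⟩ := hρdvd
    refine ⟨w, ?_⟩
    rw [hρ]
    calc X * g * X - X = (X * g - 1) * X := by ring
      _ = ρ * w * X := by rw [hw]
      _ = X * ρ * w := by ring
  obtain ⟨x, hx⟩ := aeval_mem_inr h g hgc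
  have hxh : h * x * h = h := by
    apply Unitization.inr_injective (R := ℂ)
    rw [Unitization.inr_mul, Unitization.inr_mul]
    obtain ⟨w, hw⟩ := hμdvd
    have h0 : aeval (h : Unitization ℂ A) (X * g * X - X) = 0 := by
      rw [hw, map_mul, hμ, minpoly.aeval, zero_mul]
    rw [map_sub, map_mul, map_mul, aeval_X, sub_eq_zero] at h0
    rw [hx, h0]
  exact ⟨x * star a, trick_assoc proper a x h hh hxh⟩

lemma proper_of_hermitian_regular
    (herm : ∀ a : A, star a = a → ∀ z ∈ spectrum ℂ (a : Unitization ℂ A), z.im = 0)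
    (hreg : ∀ a : A, ∃ x : A, a * x * a = a) (a : A) (ha : star a * a = 0) : a = 0 := by
  obtain ⟨x, hx⟩ := hreg a
  obtain ⟨e, he⟩ : ∃ e : A, e = a * x := ⟨_, rfl⟩
  have hee : e * e = e := by rw [he, ← mul_assoc, hx]
  have hsee : star e * star e = star e := by
    have := congrArg star hee; rwa [star_mul] at this
  have hse : star e * e = 0 := by
    rw [he, star_mul, mul_assoc, ← mul_assoc (star a) a x, ha, zero_mul, mul_zero]
  obtain ⟨v, hv⟩ : ∃ v : A, v = Complex.I • (e - star e) := ⟨_, rfl⟩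
  have hvsa : star v = v := by
    rw [hv, star_smul, star_sub, star_star, Complex.star_def, Complex.conj_I, neg_smul,
      ← smul_neg, neg_sub]
  -- v^3 = -v
  have hw3 : (e - star e) * (e - star e) * (e - star e) = e - star e := by
    have h1 : e * (e * star e) = e * star e := by rw [← mul_assoc, hee]
    have h2 : star e * (e * star e) = 0 := by rw [← mul_assoc, hse, zero_mul]
    have h3 : e * star e * e = e * (star e * e) := mul_assoc _ _ _
    have h4 : e * star e * star e = e * star e := by rw [mul_assoc, hsee]
    simp only [sub_mul, mul_sub, hee, hsee, hse, zero_mul, mul_zero, sub_zero, zero_sub,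
      h3, hse, mul_zero, h1, h2, h4]
    abel
  have hv3 : v * v * v + v = 0 := by
    have hIz : Complex.I * (Complex.I * Complex.I) + Complex.I = 0 := by
      simp [Complex.I_mul_I]
    simp only [hv, smul_mul_assoc, mul_smul_comm, smul_smul]
    rw [hw3, ← add_smul, hIz, zero_smul]
  -- pass to the unitization
  have hvU : (v : Unitization ℂ A) * (v : Unitization ℂ A) * (v : Unitization ℂ A)
      + (v : Unitization ℂ A) = 0 := by
    rw [← Unitization.inr_mul, ← Unitization.inr_mul, ← Unitization.inr_add, hv3,
      Unitization.inr_zero]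
  have hiu : IsUnit ((algebraMap ℂ (Unitization ℂ A)) Complex.I - (v : Unitization ℂ A)) := by
    by_contra hiu
    have := herm v hvsa Complex.I (spectrum.mem_iff.mpr hiu)
    simp [Complex.I_im] at this
  have hiu' : IsUnit ((algebraMap ℂ (Unitization ℂ A)) (-Complex.I) - (v : Unitization ℂ A)) := by
    by_contra hiu'
    have := herm v hvsa (-Complex.I) (spectrum.mem_iff.mpr hiu')
    simp [Complex.I_im] at this
  have hprod : ((algebraMap ℂ (Unitization ℂ A)) Complex.I - (v : Unitization ℂ A)) *
      ((algebraMap ℂ (Unitization ℂ A)) (-Complex.I) - (v : Unitization ℂ A))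
      = 1 + (v : Unitization ℂ A) * (v : Unitization ℂ A) := by
    have hII : Complex.I * -Complex.I = 1 := by simp [Complex.I_mul_I]
    rw [sub_mul, mul_sub, mul_sub, ← map_mul,
      ← Algebra.commutes (-Complex.I) (v : Unitization ℂ A), hII, map_one, map_neg]
    noncomm_ring
  have hunit : IsUnit (1 + (v : Unitization ℂ A) * (v : Unitization ℂ A)) := by
    rw [← hprod]; exact hiu.mul hiu'
  have hvz : (v : Unitization ℂ A) = 0 := by
    have hz : (v : Unitization ℂ A) * (1 + (v : Unitization ℂ A) * (v : Unitization ℂ A))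
        = 0 * (1 + (v : Unitization ℂ A) * (v : Unitization ℂ A)) := by
      rw [zero_mul, mul_add, mul_one, ← mul_assoc, ← hvU, add_comm]
    exact hunit.mul_right_cancel hz
  have hv0 : v = 0 := by
    apply Unitization.inr_injective (R := ℂ)
    rw [hvz, Unitization.inr_zero]
  have hes : e - star e = 0 := by
    have h1 : (-Complex.I) • (Complex.I • (e - star e)) = (0 : A) := by
      rw [← hv, hv0, smul_zero]
    rwa [smul_smul, neg_mul, Complex.I_mul_I, neg_neg, one_smul] at h1
  have he0 : e = 0 := by
    have : e = star e := by rwa [sub_eq_zero] at hes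
    calc e = e * e := hee.symm
      _ = star e * e := by rw [← this]
      _ = 0 := hse
  rw [← hx, ← he, he0, zero_mul]

end AuxProperInvolution

/-- In an algebraic complex `*`-algebra, the involution is proper iff the
algebra is hermitian and von Neumann regular. -/
theorem properInvolution_iff_hermitian_and_vonNeumannRegular (A : Type*) [NonUnitalRing A]
    [Module ℂ A] [SMulCommClass ℂ A A] [IsScalarTower ℂ A A] [StarRing A] [StarModule ℂ A]
    (halg : IsAlgebraicAlgebra A) :
    HasProperInvolution A ↔ (IsHermitianStarAlgebra A ∧ ∀ a : A, ∃ x : A, a * x * a = a) := by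
  constructor
  · intro hp
    exact ⟨fun a hsa z hz => hermitian_of_proper hp (fun b => isIntegral_inr' halg b) a hsa hz,
      fun a => regular_of_proper hp (fun b => isIntegral_inr' halg b) a⟩
  · rintro ⟨herm, hreg⟩ a ha
    exact proper_of_hermitian_regular herm hreg a ha
end

section
/- Let 𝒜 be a commutative unital C*-algebra and let B ⊆ 𝒜 be a dense unital *-subalgebra (containing the unit of 𝒜) which, as a *-algebra, is algebraic and a Baer *-algebra. Then 𝒜 is a Baer *-algebra (i.e., a commutative AW*-algebra), and every projection of 𝒜 belongs to B. -/
/-- A Baer `*`-ring: the right annihilator of every nonempty subset is the principal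
right ideal generated by a projection. -/
def IsBaerStarRing (A : Type*) [Mul A] [Zero A] [Star A] : Prop :=
  ∀ S : Set A, S.Nonempty → ∃ f : A, star f = f ∧ f * f = f ∧
    {y : A | ∀ s ∈ S, s * y = 0} = {z : A | ∃ x : A, z = f * x}

open Polynomial

/-- Baer star-ring property transports along multiplicative, zero- and star-preserving
bijections. -/
lemma isBaerStarRing_of_equiv {A B : Type*} [Mul A] [Zero A] [Star A]
    [Mul B] [Zero B] [Star B] (e : A ≃ B) (hm : ∀ x y, e (x * y) = e x * e y)
    (hz : e 0 = 0) (hs : ∀ x, e (star x) = star (e x)) (h : IsBaerStarRing A) :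
    IsBaerStarRing B := by
  intro S hS
  obtain ⟨s₀, hs₀⟩ := hS
  obtain ⟨f, hf1, hf2, hf3⟩ := h (e ⁻¹' S) ⟨e.symm s₀, by simp [Set.mem_preimage, hs₀]⟩
  refine ⟨e f, by rw [← hs, hf1], by rw [← hm, hf2], ?_⟩
  ext y
  simp only [Set.mem_setOf_eq]
  have key : (∀ s ∈ S, s * y = 0) ↔ ∀ t ∈ e ⁻¹' S, t * e.symm y = 0 := by
    constructor
    · intro H t ht
      apply e.injective
      rw [hm, e.apply_symm_apply, hz]
      exact H (e t) ht
    · intro H s hsS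
      have hmem : e.symm s ∈ e ⁻¹' S := by
        simp only [Set.mem_preimage, e.apply_symm_apply]; exact hsS
      have h1 := H (e.symm s) hmem
      calc s * y = e (e.symm s * e.symm y) := by
            rw [hm, e.apply_symm_apply, e.apply_symm_apply]
        _ = 0 := by rw [h1, hz]
  rw [key]
  have h2 := Set.ext_iff.mp hf3 (e.symm y)
  simp only [Set.mem_setOf_eq] at h2
  rw [h2]
  constructor
  · rintro ⟨x, hx⟩
    exact ⟨e x, by rw [← hm, ← hx, e.apply_symm_apply]⟩
  · rintro ⟨x, hx⟩
    refine ⟨e.symm x, ?_⟩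
    apply e.injective
    rw [e.apply_symm_apply, hm, e.apply_symm_apply, hx]

section CX

variable {X : Type*} [TopologicalSpace X]

/-- Evaluation at a point, as an algebra homomorphism `C(X, ℂ) →ₐ[ℂ] ℂ`. -/
noncomputable def evalAlgHomC (z : X) : C(X, ℂ) →ₐ[ℂ] ℂ :=
  (Pi.evalAlgHom ℂ (fun _ => ℂ) z).comp (ContinuousMap.coeFnAlgHom ℂ)

lemma aeval_apply_CX (b : C(X, ℂ)) (q : ℂ[X]) (z : X) :
    (aeval b q) z = aeval (b z) q := by
  have h := aeval_algHom_apply (evalAlgHomC z) b q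
  exact h.symm

lemma aeval_mem_starSubalgebra (B' : StarSubalgebra ℂ C(X, ℂ)) {b : C(X, ℂ)} (hb : b ∈ B')
    (q : ℂ[X]) : aeval b q ∈ B' := by
  have hb' : b ∈ B'.toSubalgebra := hb
  rw [← StarSubalgebra.mem_toSubalgebra, ← Polynomial.coe_aeval_mk_apply (p := q) b hb']
  exact (aeval (⟨b, hb'⟩ : B'.toSubalgebra) q).2

/-- From an algebraic element `b` of a subalgebra of `C(X, ℂ)`, we can produce indicator
functions of conditions on the values of `b`, inside the subalgebra. -/
lemma exists_indicator {B' : StarSubalgebra ℂ C(X, ℂ)} {b : C(X, ℂ)} (hb : b ∈ B')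
    (halg : IsAlgebraic ℂ b) (P : ℂ → Prop) [DecidablePred P] :
    ∃ e : C(X, ℂ), e ∈ B' ∧ ∀ z, e z = if P (b z) then 1 else 0 := by
  classical
  obtain ⟨p, hp0, hp⟩ := halg
  have hfin : (Set.range ⇑b).Finite := by
    refine (p.rootSet_finite ℂ).subset ?_
    rintro _ ⟨z, rfl⟩
    rw [Polynomial.mem_rootSet]
    refine ⟨hp0, ?_⟩
    rw [← aeval_apply_CX, hp]
    rfl
  refine ⟨aeval b (Lagrange.interpolate hfin.toFinset id (fun r => if P r then 1 else 0)),
    aeval_mem_starSubalgebra B' hb _, fun z => ?_⟩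
  rw [aeval_apply_CX, Polynomial.coe_aeval_eq_eval]
  exact Lagrange.eval_interpolate_at_node _ (Set.injOn_id _)
    (hfin.mem_toFinset.mpr ⟨z, rfl⟩)

lemma projection_values {G : C(X, ℂ)} (hG : G * G = G) (z : X) : G z = 0 ∨ G z = 1 := by
  have h : G z * G z = G z := by rw [← ContinuousMap.mul_apply, hG]
  have h2 : G z * (G z - 1) = 0 := by rw [mul_sub, mul_one, h, sub_self]
  rcases mul_eq_zero.mp h2 with h3 | h3
  · exact Or.inl h3
  · exact Or.inr (sub_eq_zero.mp h3)

lemma close_one {c : ℂ} (h : dist (1 : ℂ) c < 1/4) : 1/2 < c.re := by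
  rw [Complex.dist_eq] at h
  have h1 : ((1 : ℂ) - c).re ≤ ‖1 - c‖ := Complex.re_le_norm _
  rw [Complex.sub_re, Complex.one_re] at h1
  linarith

lemma close_zero {c : ℂ} (h : dist (0 : ℂ) c < 1/4) : ¬ (1/2 < c.re) := by
  rw [Complex.dist_eq] at h
  have habs : ‖0 - c‖ = ‖c‖ := by simp
  rw [habs] at h
  have h1 : c.re ≤ ‖c‖ := Complex.re_le_norm _
  linarith

/-- Given a dense algebraic star-subalgebra of `C(X, ℂ)`, every point of an open set admits
a projection in the subalgebra equal to `1` at the point and vanishing off the open set. -/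
lemma exists_proj_near {X : Type*} [TopologicalSpace X] [CompactSpace X] [T2Space X]
    {B' : StarSubalgebra ℂ C(X, ℂ)} (hdense : Dense (B' : Set C(X, ℂ)))
    (halg : ∀ a ∈ B', IsAlgebraic ℂ a) {W : Set X} (hW : IsOpen W) {x : X} (hx : x ∈ W) :
    ∃ e : C(X, ℂ), e ∈ B' ∧ e x = 1 ∧ ∀ z ∉ W, e z = 0 := by
  classical
  obtain ⟨h, h0, h1, -⟩ := exists_continuous_zero_one_of_isClosed hW.isClosed_compl
    isClosed_singleton (Set.disjoint_singleton_right.mpr (by simpa using hx))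
  set t : C(X, ℂ) := (⟨Complex.ofReal, Complex.continuous_ofReal⟩ : C(ℝ, ℂ)).comp h with htdef
  obtain ⟨b, hbB, hbd⟩ := hdense.exists_dist_lt t (by norm_num : (0:ℝ) < 1/4)
  obtain ⟨e, heB, he⟩ := exists_indicator hbB (halg b hbB) (fun c => 1/2 < c.re)
  have hdz : ∀ z, dist (t z) (b z) < 1/4 :=
    fun z => lt_of_le_of_lt (ContinuousMap.dist_apply_le_dist z) hbd
  refine ⟨e, heB, ?_, ?_⟩
  · rw [he x, if_pos]
    have htx : t x = 1 := by
      have hx1 : h x = 1 := h1 (Set.mem_singleton x)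
      simp [htdef, ContinuousMap.comp_apply, hx1]
    have := hdz x
    rw [htx] at this
    exact close_one this
  · intro z hz
    rw [he z, if_neg]
    have htz : t z = 0 := by
      have hz0 : h z = 0 := h0 hz
      simp [htdef, ContinuousMap.comp_apply, hz0]
    have := hdz z
    rw [htz] at this
    exact close_zero this

/-- The core theorem, for `C(X, ℂ)`. -/
theorem main_CX {X : Type*} [TopologicalSpace X] [CompactSpace X] [T2Space X]
    (B' : StarSubalgebra ℂ C(X, ℂ)) (hdense : Dense (B' : Set C(X, ℂ)))
    (halg : ∀ a ∈ B', IsAlgebraic ℂ a) (hbaer : IsBaerStarRing B') :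
    IsBaerStarRing C(X, ℂ) ∧ ∀ p : C(X, ℂ), star p = p → p * p = p → p ∈ B' := by
  constructor
  · intro S hS
    classical
    set T : Set B' := {t : B' | ∀ s ∈ S, s * (t : C(X, ℂ)) = 0} with hT
    have hT0 : (0 : B') ∈ T := by
      intro s _
      simp
    obtain ⟨g, hgs, hgi, hgann⟩ := hbaer T ⟨0, hT0⟩
    have hgiC : (g : C(X, ℂ)) * (g : C(X, ℂ)) = g := congrArg Subtype.val hgi
    have hgsC : star (g : C(X, ℂ)) = g := congrArg Subtype.val hgs
    have hgmem : g ∈ {y : B' | ∀ t ∈ T, t * y = 0} := by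
      rw [hgann]
      exact ⟨g, hgi.symm⟩
    have hgann1 : ∀ t ∈ T, (t : C(X, ℂ)) * g = 0 := by
      intro t ht
      have h1 : t * g = 0 := hgmem t ht
      exact congrArg Subtype.val h1
    set G : C(X, ℂ) := (g : C(X, ℂ)) with hGdef
    have keyA : ∀ s ∈ S, s * (1 - G) = 0 := by
      intro s hsS
      ext z
      rw [ContinuousMap.mul_apply, ContinuousMap.zero_apply]
      rcases projection_values hgiC z with h0 | h1
      · by_cases hsz : s z = 0
        · rw [hsz, zero_mul]
        · exfalso
          have hWopen : IsOpen {w | s w ≠ 0} := by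
            have heq : {w | s w ≠ 0} = (⇑s ⁻¹' {0})ᶜ := by ext w; simp
            rw [heq]
            exact isOpen_compl_iff.mpr (IsClosed.preimage (map_continuous s) isClosed_singleton)
          obtain ⟨e, heB, hex, he0⟩ := exists_proj_near hdense halg hWopen hsz
          have heann : (⟨e, heB⟩ : B') ∈ {y : B' | ∀ t ∈ T, t * y = 0} := by
            intro t ht
            have hst : s * (t : C(X, ℂ)) = 0 := ht s hsS
            apply Subtype.ext
            show (t : C(X, ℂ)) * e = 0
            ext w
            rw [ContinuousMap.mul_apply]
            by_cases hsw : s w = 0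
            · have hew : e w = 0 := he0 w (by simpa using hsw)
              simp [hew]
            · have htw : (t : C(X, ℂ)) w = 0 := by
                have h2 := DFunLike.congr_fun hst w
                rw [ContinuousMap.mul_apply, ContinuousMap.zero_apply] at h2
                exact (mul_eq_zero.mp h2).resolve_left hsw
              simp [htw]
          rw [hgann] at heann
          obtain ⟨x, hxx⟩ := heann
          have hC : e = G * (x : C(X, ℂ)) := congrArg Subtype.val hxx
          have hz1 : e z = G z * (x : C(X, ℂ)) z := by
            rw [hC]; rfl
          rw [hex, h0, zero_mul] at hz1
          exact one_ne_zero hz1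
      · rw [ContinuousMap.sub_apply, ContinuousMap.one_apply, h1, sub_self, mul_zero]
    have keyB : ∀ y : C(X, ℂ), (∀ s ∈ S, s * y = 0) → G * y = 0 := by
      intro y hy
      ext z
      rw [ContinuousMap.mul_apply, ContinuousMap.zero_apply]
      by_cases hyz : y z = 0
      · rw [hyz, mul_zero]
      rcases projection_values hgiC z with h0 | h1
      · rw [h0, zero_mul]
      exfalso
      have hWopen : IsOpen {w | y w ≠ 0} := by
        have heq : {w | y w ≠ 0} = (⇑y ⁻¹' {0})ᶜ := by ext w; simp
        rw [heq]
        exact isOpen_compl_iff.mpr (IsClosed.preimage (map_continuous y) isClosed_singleton)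
      obtain ⟨e, heB, hex, he0⟩ := exists_proj_near hdense halg hWopen hyz
      have heT : (⟨e, heB⟩ : B') ∈ T := by
        intro s hsS
        ext w
        rw [ContinuousMap.mul_apply, ContinuousMap.zero_apply]
        by_cases hyw : y w = 0
        · have hew : e w = 0 := he0 w (by simpa using hyw)
          show s w * e w = 0
          rw [hew, mul_zero]
        · have hsw : s w = 0 := by
            have h2 := DFunLike.congr_fun (hy s hsS) w
            rw [ContinuousMap.mul_apply, ContinuousMap.zero_apply] at h2
            exact (mul_eq_zero.mp h2).resolve_right hyw
          show s w * e w = 0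
          rw [hsw, zero_mul]
      have h4 := hgann1 ⟨e, heB⟩ heT
      have h5 := DFunLike.congr_fun h4 z
      rw [ContinuousMap.mul_apply, ContinuousMap.zero_apply] at h5
      have hez : e z = 1 := hex
      rw [hez, h1, one_mul] at h5
      exact one_ne_zero h5
    refine ⟨1 - G, ?_, ?_, ?_⟩
    · rw [star_sub, star_one, hgsC]
    · have hr : (1 - G) * (1 - G) = 1 - G - (G - G * G) := by ring
      rw [hgiC] at hr
      simpa using hr
    · ext y
      simp only [Set.mem_setOf_eq]
      constructor
      · intro hy
        exact ⟨y, by rw [sub_mul, one_mul, keyB y hy, sub_zero]⟩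
      · rintro ⟨x, rfl⟩ s hsS
        rw [← mul_assoc, keyA s hsS, zero_mul]
  · intro p hps hpi
    classical
    obtain ⟨b, hbB, hbd⟩ := hdense.exists_dist_lt p (by norm_num : (0:ℝ) < 1/4)
    obtain ⟨e, heB, he⟩ := exists_indicator hbB (halg b hbB) (fun c => 1/2 < c.re)
    have hdz : ∀ z, dist (p z) (b z) < 1/4 :=
      fun z => lt_of_le_of_lt (ContinuousMap.dist_apply_le_dist z) hbd
    have hpe : p = e := by
      ext z
      rcases projection_values hpi z with h0 | h1
      · rw [he z, h0, if_neg]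
        have := hdz z
        rw [h0] at this
        exact close_zero this
      · rw [he z, h1, if_pos]
        have := hdz z
        rw [h1] at this
        exact close_one this
    rw [hpe]
    exact heB

end CX

/-- Let `𝒜` be a commutative unital C*-algebra and `B ⊆ 𝒜` a dense
unital `*`-subalgebra which is algebraic and a Baer `*`-algebra. Then `𝒜` is a Baer
`*`-algebra (a commutative AW*-algebra) and every projection of `𝒜` lies in `B`. -/
theorem baer_and_projections_mem_of_dense_algebraic_baer_starSubalgebra
    (𝒜 : Type*) [NormedCommRing 𝒜] [StarRing 𝒜] [CStarRing 𝒜] [NormedAlgebra ℂ 𝒜]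
    [CompleteSpace 𝒜] [StarModule ℂ 𝒜]
    (B : StarSubalgebra ℂ 𝒜) (hdense : Dense (B : Set 𝒜))
    (halg : ∀ b : B, IsAlgebraic ℂ b) (hbaer : IsBaerStarRing B) :
    IsBaerStarRing 𝒜 ∧ ∀ p : 𝒜, star p = p → p * p = p → p ∈ B := by
  letI : CommCStarAlgebra 𝒜 :=
    { ‹NormedCommRing 𝒜›, ‹StarRing 𝒜›, ‹CStarRing 𝒜›, ‹NormedAlgebra ℂ 𝒜›,
      ‹CompleteSpace 𝒜›, ‹StarModule ℂ 𝒜› with }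
  classical
  set X := WeakDual.characterSpace ℂ 𝒜 with hXdef
  let Φ : 𝒜 ≃⋆ₐ[ℂ] C(X, ℂ) := gelfandStarTransform 𝒜
  set B' : StarSubalgebra ℂ C(X, ℂ) := StarSubalgebra.map (Φ : 𝒜 →⋆ₐ[ℂ] C(X, ℂ)) B with hB'def
  have hiso : Isometry ⇑Φ := gelfandTransform_isometry 𝒜
  let eIso : 𝒜 ≃ᵢ C(X, ℂ) := { Φ.toRingEquiv.toEquiv with isometry_toFun := hiso }
  have hdense' : Dense (B' : Set C(X, ℂ)) := by
    have himg : (B' : Set C(X, ℂ)) = ⇑Φ '' (B : Set 𝒜) := rfl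
    rw [himg, dense_iff_closure_eq]
    have hcl := eIso.toHomeomorph.image_closure (B : Set 𝒜)
    have hcoe : ⇑eIso.toHomeomorph = ⇑Φ := rfl
    rw [hcoe] at hcl
    rw [← hcl, dense_iff_closure_eq.mp hdense, Set.image_univ]
    exact Set.range_eq_univ.mpr Φ.surjective
  have halg' : ∀ a ∈ B', IsAlgebraic ℂ a := by
    intro a ha
    obtain ⟨c, hcB, rfl⟩ := StarSubalgebra.mem_map.mp ha
    obtain ⟨p, hp0, hp⟩ := halg ⟨c, hcB⟩
    refine ⟨p, hp0, ?_⟩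
    have h1 : Polynomial.aeval c p = 0 := by
      have h2 := Polynomial.aeval_algHom_apply B.subtype (⟨c, hcB⟩ : B) p
      rw [hp] at h2
      simpa using h2
    have h3 := Polynomial.aeval_algHom_apply (Φ : 𝒜 →⋆ₐ[ℂ] C(X, ℂ)) c p
    rw [h1] at h3
    simpa using h3
  have hinv : ∀ c : C(X, ℂ), c ∈ B' → Φ.symm c ∈ B := by
    intro c hc
    obtain ⟨a, haB, rfl⟩ := StarSubalgebra.mem_map.mp hc
    have : Φ.symm ((Φ : 𝒜 →⋆ₐ[ℂ] C(X, ℂ)) a) = a := Φ.symm_apply_apply a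
    rw [this]
    exact haB
  let eq1 : B ≃ B' :=
    { toFun := fun b => ⟨Φ ↑b, StarSubalgebra.mem_map.mpr ⟨↑b, b.2, rfl⟩⟩
      invFun := fun c => ⟨Φ.symm ↑c, hinv ↑c c.2⟩
      left_inv := fun b => Subtype.ext (Φ.symm_apply_apply ↑b)
      right_inv := fun c => Subtype.ext (Φ.apply_symm_apply ↑c) }
  have hbaer' : IsBaerStarRing B' := by
    refine isBaerStarRing_of_equiv eq1 (fun x y => Subtype.ext (map_mul Φ ↑x ↑y))
      (Subtype.ext (map_zero Φ)) (fun x => Subtype.ext (map_star Φ ↑x)) hbaer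
  obtain ⟨hb1, hb2⟩ := main_CX B' hdense' halg' hbaer'
  constructor
  · refine isBaerStarRing_of_equiv
      (⟨⇑Φ.symm, ⇑Φ, Φ.apply_symm_apply, Φ.symm_apply_apply⟩ : C(X, ℂ) ≃ 𝒜) ?_ ?_ ?_ hb1
    · intro x y
      exact map_mul Φ.symm x y
    · exact map_zero Φ.symm
    · intro x
      exact map_star Φ.symm x
  · intro p hps hpi
    have h1 : Φ p ∈ B' :=
      hb2 (Φ p) (by rw [← map_star Φ, hps]) (by rw [← map_mul Φ, hpi])
    obtain ⟨a, haB, ha⟩ := StarSubalgebra.mem_map.mp h1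
    have h2 : Φ a = Φ p := ha
    have h3 : a = p := Φ.injective h2
    rwa [← h3]
end
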